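/- Let M be a countable transitive model of ZF⁻ and let G be an 𝔽^M-generic filter over M. Then there is a binary relation E on ω with E ∈ M[G] such that the structures (ω,E) and (M,∈) are isomorphic in V. -/

import Mathlib

set_option autoImplicit false

attribute [local instance] Classical.propDecidable

namespace CF

/-- First-order formulas of the language of set theory with `κ` class-predicate
variables (the languages `L^κ`) and `n` free set variables; `κ = 0` gives the
pure ∈-formulas. There is no class quantification. -/
inductive CFml : ℕ → ℕ → Type
  | mem {κ n : ℕ} (i j : Fin n) : CFml κ n
  | eq {κ n : ℕ} (i j : Fin n) : CFml κ n
  | cls {κ n : ℕ} (X : Fin κ) (i : Fin n) : CFml κ n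
  | not {κ n : ℕ} : CFml κ n → CFml κ n
  | or {κ n : ℕ} : CFml κ n → CFml κ n → CFml κ n
  | ex {κ n : ℕ} : CFml κ (n + 1) → CFml κ n

/-- Satisfaction of such a formula in the structure whose domain is the class `D`,
with class predicates interpreted by `Γ` and variable assignment `v`. -/
def SatC (D : Set ZFSet) : ∀ {κ n : ℕ}, (Fin κ → Set ZFSet) → CFml κ n → (Fin n → ZFSet) → Prop
  | _, _, _, .mem i j, v => v i ∈ v j
  | _, _, _, .eq i j, v => v i = v j
  | _, _, Γ, .cls X i, v => v i ∈ Γ X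
  | _, _, Γ, .not φ, v => ¬ SatC D Γ φ v
  | _, _, Γ, .or φ ψ, v => SatC D Γ φ v ∨ SatC D Γ ψ v
  | _, _, Γ, .ex φ, v => ∃ x ∈ D, SatC D Γ φ (Fin.snoc v x)

/-- Pure ∈-formulas with `n` free variables. -/
abbrev Fml (n : ℕ) : Type := CFml 0 n

/-- Satisfaction of an ∈-formula in `(M, ∈)` (quantifiers relativized to `M`). -/
def Sat (M : ZFSet) {n : ℕ} (φ : Fml n) (v : Fin n → ZFSet) : Prop :=
  SatC M.toSet (fun i => i.elim0) φ v

/-- A `k`-ary relation on `M` is definable (with parameters) over `(M, ∈)`. -/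
def DefinableOver (M : ZFSet) {k : ℕ} (S : (Fin k → ZFSet) → Prop) : Prop :=
  ∃ (m : ℕ) (φ : Fml (k + m)) (a : Fin m → ZFSet), (∀ i, a i ∈ M) ∧
    ∀ v : Fin k → ZFSet, (∀ i, v i ∈ M) → (S v ↔ Sat M φ (Fin.append v a))

/-- The collection of classes of `M` that are definable over `(M,∈)` with parameters. -/
def DefClasses (M : ZFSet) : Set (Set ZFSet) :=
  {S | S ⊆ M.toSet ∧ DefinableOver M (fun v : Fin 1 → ZFSet => v 0 ∈ S)}

/-- `M` is a countable transitive model of `ZF⁻` (`ZF` without the power set axiom,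
with Collection instead of Replacement), stated semantically via
the closure conditions that satisfaction of the `ZF⁻`-axioms imposes on a
transitive set (Foundation is automatic for transitive sets). -/
structure IsCTM (M : ZFSet) : Prop where
  countable : M.toSet.Countable
  transitive : M.IsTransitive
  empty_mem : (∅ : ZFSet) ∈ M
  pairing : ∀ x ∈ M, ∀ y ∈ M, ({x, y} : ZFSet) ∈ M
  union : ∀ x ∈ M, (ZFSet.sUnion x : ZFSet) ∈ M
  infinity : ZFSet.omega ∈ M
  separation : ∀ (m : ℕ) (φ : Fml (m + 1)) (a : Fin m → ZFSet), (∀ i, a i ∈ M) →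
    ∀ x ∈ M, ZFSet.sep (fun y => Sat M φ (Fin.snoc a y)) x ∈ M
  collection : ∀ (m : ℕ) (φ : Fml (m + 2)) (a : Fin m → ZFSet), (∀ i, a i ∈ M) →
    ∀ x ∈ M, (∀ y ∈ x, ∃ z ∈ M, Sat M φ (Fin.snoc (Fin.snoc a y) z)) →
      ∃ b ∈ M, ∀ y ∈ x, ∃ z ∈ b, Sat M φ (Fin.snoc (Fin.snoc a y) z)

/-- `x` is a (von Neumann) ordinal. -/
def IsOrdZ (x : ZFSet) : Prop := x.IsTransitive ∧ ∀ y ∈ x, ZFSet.IsTransitive y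

/-- `α` is an ordinal of the model `M`. -/
def IsOrdIn (M α : ZFSet) : Prop := α ∈ M ∧ IsOrdZ α
/-- A notion of (class) forcing for `(M, C)`: a preorder whose domain and order
relation are classes in `C` and whose conditions are elements of `M`, with a
maximal element `one`. For the first-order setting of a partial order definable
over a model `M` of `ZF⁻`, take `C = DefClasses M`. -/
structure ClassForcing (M : ZFSet) (C : Set (Set ZFSet)) where
  P : Set ZFSet
  le : ZFSet → ZFSet → Prop
  P_subM : ∀ p ∈ P, p ∈ M
  P_mem : P ∈ C
  le_mem : {x : ZFSet | ∃ p ∈ P, ∃ q ∈ P, le p q ∧ x = ZFSet.pair p q} ∈ C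
  le_refl : ∀ p ∈ P, le p p
  le_trans : ∀ p ∈ P, ∀ q ∈ P, ∀ r ∈ P, le p q → le q r → le p r
  one : ZFSet
  one_mem : one ∈ P
  le_one : ∀ p ∈ P, le p one

variable {M : ZFSet} {C : Set (Set ZFSet)}

/-- `p` and `q` are compatible in `F`. -/
def Compat (F : ClassForcing M C) (p q : ZFSet) : Prop :=
  ∃ r ∈ F.P, F.le r p ∧ F.le r q

/-- `F` is antisymmetric, i.e. an actual partial order. -/
def Antisymmetric (F : ClassForcing M C) : Prop :=
  ∀ p ∈ F.P, ∀ q ∈ F.P, F.le p q → F.le q p → p = q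

/-- `F` is separative. -/
def Separative (F : ClassForcing M C) : Prop :=
  ∀ p ∈ F.P, ∀ q ∈ F.P, ¬ F.le p q → ∃ r ∈ F.P, F.le r p ∧ ¬ Compat F r q

/-- `σ` is a `P`-name: every element of `σ` is a pair `⟨τ, p⟩` where `τ` is a
`P`-name and `p ∈ P`. -/
inductive IsName (P : Set ZFSet) : ZFSet → Prop
  | intro (σ : ZFSet)
      (hshape : ∀ x ∈ σ, ∃ τ p, p ∈ P ∧ x = ZFSet.pair τ p)
      (hrec : ∀ τ p : ZFSet, ZFSet.pair τ p ∈ σ → IsName P τ) : IsName P σ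

theorem transGen_mem_of_pair_mem {τ p σ : ZFSet} (h : ZFSet.pair τ p ∈ σ) :
    Relation.TransGen (· ∈ ·) τ σ := by
  have h1 : τ ∈ ({τ, p} : ZFSet) := by simp
  have h2 : ({τ, p} : ZFSet) ∈ ZFSet.pair τ p := by simp [ZFSet.pair]
  exact Relation.TransGen.tail (Relation.TransGen.tail (Relation.TransGen.single h1) h2) h

/-- The evaluation `σ^G = {τ^G ∣ ∃ p ∈ G, ⟨τ,p⟩ ∈ σ}` of a name by a filter `G`
(defined by recursion on the transitive closure of `∈`; note that any `τ` with
`⟨τ,p⟩ ∈ σ` satisfies `τ ∈ ⋃₀ ⋃₀ σ`). -/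
noncomputable def val (G : Set ZFSet) : ZFSet → ZFSet :=
  WellFounded.fix (ZFSet.mem_wf.transGen) fun σ ih =>
    @ZFSet.image
      (fun τ => if h : Relation.TransGen (· ∈ ·) τ σ then ih τ h else ∅)
      (Classical.allZFSetDefinable _)
      (ZFSet.sep (fun τ => ∃ p ∈ G, ZFSet.pair τ p ∈ σ) (ZFSet.sUnion (ZFSet.sUnion σ : ZFSet) : ZFSet))

/-- `D` is dense in the forcing `(P, ≤)`. -/
def DenseIn (P : Set ZFSet) (le : ZFSet → ZFSet → Prop) (D : Set ZFSet) : Prop :=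
  ∀ p ∈ P, ∃ q ∈ D, q ∈ P ∧ le q p

/-- `G` is a filter on `(P, ≤)` which is generic over `(M, C)`, i.e. it meets every
dense subclass of `P` lying in `C`. -/
structure IsGenericRaw (M : ZFSet) (C : Set (Set ZFSet)) (P : Set ZFSet)
    (le : ZFSet → ZFSet → Prop) (G : Set ZFSet) : Prop where
  sub : G ⊆ P
  upward : ∀ p ∈ G, ∀ q ∈ P, le p q → q ∈ G
  compat : ∀ p ∈ G, ∀ q ∈ G, ∃ r ∈ G, le r p ∧ le r q
  meets : ∀ D ∈ C, D ⊆ P → DenseIn P le D → (D ∩ G).Nonempty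

/-- `G` is `F`-generic over `(M, C)`. -/
def IsGeneric (F : ClassForcing M C) (G : Set ZFSet) : Prop :=
  IsGenericRaw M C F.P F.le G

/-- The generic extension `M[G] = {σ^G ∣ σ ∈ M^P}` as a class. -/
def MG (M : ZFSet) (P : Set ZFSet) (G : Set ZFSet) : Set ZFSet :=
  {x | ∃ σ, σ ∈ M ∧ IsName P σ ∧ x = val G σ}

/-- `Γ` is a class `P`-name over `(M, C)`. -/
def IsClassName (M : ZFSet) (C : Set (Set ZFSet)) (P : Set ZFSet) (Γ : Set ZFSet) : Prop :=
  Γ ∈ C ∧ ∀ x ∈ Γ, ∃ τ p, τ ∈ M ∧ IsName P τ ∧ p ∈ P ∧ x = ZFSet.pair τ p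

/-- Evaluation `Γ^G` of a class name. -/
def classVal (G : Set ZFSet) (Γ : Set ZFSet) : Set ZFSet :=
  {x | ∃ τ p, p ∈ G ∧ ZFSet.pair τ p ∈ Γ ∧ x = val G τ}

/-- Encoding of a tuple of sets as a single set (iterated Kuratowski pairs). -/
def tupleZF : ∀ {k : ℕ}, (Fin k → ZFSet) → ZFSet
  | 0, _ => ∅
  | _ + 1, v => ZFSet.pair (v 0) (tupleZF (fun i => v i.succ))

/-- `p ⊩ φ(σ⃗)` (with class-name parameters `Γ⃗`): for every `F`-generic filter `G`
over `(M, C)` with `p ∈ G`, `φ(σ⃗^G)` holds in `(M[G], ∈, Γ⃗^G)`. -/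
def Forces (F : ClassForcing M C) {κ n : ℕ} (φ : CFml κ n)
    (Γ : Fin κ → Set ZFSet) (p : ZFSet) (σ : Fin n → ZFSet) : Prop :=
  ∀ G : Set ZFSet, IsGeneric F G → p ∈ G →
    SatC (MG M F.P G) (fun i => classVal G (Γ i)) φ (fun i => val G (σ i))

/-- The definability lemma for `φ` over `(M, C)`: for all class-name parameters,
the class of tuples `⟨p, σ⃗⟩` such that `p ⊩ φ(σ⃗)` is in `C`. -/
def DefLemma (F : ClassForcing M C) {κ n : ℕ} (φ : CFml κ n) : Prop :=
  ∀ Γ : Fin κ → Set ZFSet, (∀ i, IsClassName M C F.P (Γ i)) →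
    {x : ZFSet | ∃ p ∈ F.P, ∃ σ : Fin n → ZFSet,
      (∀ i, σ i ∈ M ∧ IsName F.P (σ i)) ∧ Forces F φ Γ p σ ∧
      x = ZFSet.pair p (tupleZF σ)} ∈ C

/-- The truth lemma for `φ` over `(M, C)`: everything true in a generic extension
is forced by some condition in the generic filter. -/
def TruthLemma (F : ClassForcing M C) {κ n : ℕ} (φ : CFml κ n) : Prop :=
  ∀ Γ : Fin κ → Set ZFSet, (∀ i, IsClassName M C F.P (Γ i)) →
    ∀ σ : Fin n → ZFSet, (∀ i, σ i ∈ M ∧ IsName F.P (σ i)) →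
      ∀ G : Set ZFSet, IsGeneric F G →
        SatC (MG M F.P G) (fun i => classVal G (Γ i)) φ (fun i => val G (σ i)) →
        ∃ p ∈ G, Forces F φ Γ p σ

/-- The forcing theorem for `φ` over `(M, C)`. -/
def ForcingThm (F : ClassForcing M C) {κ n : ℕ} (φ : CFml κ n) : Prop :=
  DefLemma F φ ∧ TruthLemma F φ
/-- `f` is a (set-coded) function: a set of Kuratowski pairs which is functional. -/
def isFuncZ (f : ZFSet) : Prop :=
  (∀ x ∈ f, ∃ a b : ZFSet, x = ZFSet.pair a b) ∧
  ∀ a b b' : ZFSet, ZFSet.pair a b ∈ f → ZFSet.pair a b' ∈ f → b = b'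

/-- `f` is injective (as a set-coded relation). -/
def isInjZ (f : ZFSet) : Prop :=
  ∀ a a' b : ZFSet, ZFSet.pair a b ∈ f → ZFSet.pair a' b ∈ f → a = a'

/-- Domain of a set-coded relation. -/
def domZ (f : ZFSet) : Set ZFSet := {a | ∃ b, ZFSet.pair a b ∈ f}

/-- Range of a set-coded relation. -/
def ranZ (f : ZFSet) : Set ZFSet := {b | ∃ a, ZFSet.pair a b ∈ f}

/-- A set-coded binary relation is acyclic iff its transitive closure is irreflexive. -/
def acyclicZ (e : ZFSet) : Prop :=
  ∀ a : ZFSet, ¬ Relation.TransGen (fun x y => ZFSet.pair x y ∈ e) a a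

/-- The ordered triple `⟨d, e, f⟩`. -/
def tripleZ (d e f : ZFSet) : ZFSet := ZFSet.pair d (ZFSet.pair e f)
/-- `⟨d, e, f⟩` are the data of a condition of the Friedman forcing `𝔽^M`:
`d` is a finite subset of `ω`, `e` is a binary acyclic relation on `d`, `f` is
an injective function with `dom f ∈ {∅, d}` and `ran f ⊆ M`, which respects `∈`
whenever `dom f = d`. -/
structure FCond (M : ZFSet) (d e f : ZFSet) : Prop where
  d_sub : ∀ n ∈ d, n ∈ ZFSet.omega
  d_fin : d.toSet.Finite
  e_sub : ∀ x ∈ e, ∃ a ∈ d, ∃ b ∈ d, x = ZFSet.pair a b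
  e_acyc : acyclicZ e
  f_fun : isFuncZ f
  f_inj : isInjZ f
  f_dom : domZ f = (∅ : Set ZFSet) ∨ domZ f = d.toSet
  f_ran : ∀ b, b ∈ ranZ f → b ∈ M
  f_compat : domZ f = d.toSet →
    ∀ i ∈ d, ∀ j ∈ d, ∀ a b : ZFSet, ZFSet.pair i a ∈ f → ZFSet.pair j b ∈ f →
      (ZFSet.pair i j ∈ e ↔ a ∈ b)

/-- The domain of the Friedman forcing `𝔽^M`. -/
def FriedmanP (M : ZFSet) : Set ZFSet :=
  {x | ∃ d e f, FCond M d e f ∧ x = tripleZ d e f}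

/-- The ordering of the Friedman forcing: `p ≤ q` iff `d_q ⊆ d_p`,
`e_p ∩ (d_q × d_q) = e_q` and `f_q ⊆ f_p`. -/
def FriedmanLe (p q : ZFSet) : Prop :=
  ∃ dp ep fp dq eq' fq : ZFSet, p = tripleZ dp ep fp ∧ q = tripleZ dq eq' fq ∧
    (∀ n ∈ dq, n ∈ dp) ∧
    (∀ x : ZFSet, x ∈ eq' ↔ (x ∈ ep ∧ ∃ a ∈ dq, ∃ b ∈ dq, x = ZFSet.pair a b)) ∧
    (∀ x ∈ fq, x ∈ fp)
/-! ### Section 1: basics -/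

/-- The `n`-th von Neumann natural. -/
def natZ : ℕ → ZFSet
  | 0 => ∅
  | n + 1 => insert (natZ n) (natZ n)

lemma natZ_mem_omega (n : ℕ) : natZ n ∈ ZFSet.omega := by
  induction n with
  | zero => exact ZFSet.omega_zero
  | succ n ih => exact ZFSet.omega_succ ih

lemma mk_ofNat (n : ℕ) : ZFSet.mk (PSet.ofNat n) = natZ n := by
  induction n with
  | zero => rfl
  | succ n ih => show ZFSet.mk (insert _ _) = _; rw [show ZFSet.mk (insert (PSet.ofNat n) (PSet.ofNat n)) = insert (ZFSet.mk (PSet.ofNat n)) (ZFSet.mk (PSet.ofNat n)) from rfl, ih]; rfl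

theorem ZFSet.mem_toSet (a u : ZFSet) : a ∈ u.toSet ↔ a ∈ u := Iff.rfl

theorem ZFSet.toSet_empty : (∅ : ZFSet).toSet = ∅ := ZFSet.coe_empty

theorem ZFSet.toSet_insert (x y : ZFSet) : (insert x y).toSet = insert x y.toSet :=
  ZFSet.coe_insert x y

lemma mem_omega_iff {x : ZFSet} : x ∈ ZFSet.omega ↔ ∃ n : ℕ, x = natZ n := by
  constructor
  · intro h
    induction x using Quotient.inductionOn with
    | h x' =>
      obtain ⟨⟨n⟩, hn⟩ := h
      exact ⟨n, (Quotient.sound hn).trans (mk_ofNat n)⟩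
  · rintro ⟨n, rfl⟩; exact natZ_mem_omega n

lemma natZ_mem_of_lt {m n : ℕ} (h : m < n) : natZ m ∈ natZ n := by
  induction n with
  | zero => omega
  | succ n ih =>
    rcases Nat.lt_succ_iff_lt_or_eq.1 h with h' | rfl
    · exact ZFSet.mem_insert_of_mem _ (ih h')
    · exact ZFSet.mem_insert _ _

lemma natZ_inj : Function.Injective natZ := by
  intro m n h
  by_contra hne
  rcases Nat.lt_or_ge m n with h' | h'
  · exact ZFSet.mem_irrefl _ (h ▸ natZ_mem_of_lt h')
  · have h2 : natZ n ∈ natZ m := natZ_mem_of_lt (by omega)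
    rw [h] at h2; exact ZFSet.mem_irrefl _ h2

lemma mem_natZ {x : ZFSet} {n : ℕ} : x ∈ natZ n ↔ ∃ m : ℕ, m < n ∧ x = natZ m := by
  induction n with
  | zero => simp [natZ, ZFSet.notMem_empty, Nat.not_lt_zero]
  | succ n ih =>
    simp only [natZ, ZFSet.mem_insert_iff, ih]
    constructor
    · rintro (rfl | ⟨m, hm, rfl⟩)
      · exact ⟨n, by omega, rfl⟩
      · exact ⟨m, by omega, rfl⟩
    · rintro ⟨m, hm, rfl⟩
      rcases Nat.lt_succ_iff_lt_or_eq.1 hm with h' | rfl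
      · exact Or.inr ⟨m, h', rfl⟩
      · exact Or.inl rfl

lemma natZ_mem_natZ {m n : ℕ} : natZ m ∈ natZ n ↔ m < n := by
  rw [mem_natZ]
  constructor
  · rintro ⟨k, hk, h⟩; rw [natZ_inj h]; exact hk
  · intro h; exact ⟨m, h, rfl⟩

lemma natZ_toSet_finite (n : ℕ) : (natZ n).toSet.Finite := by
  induction n with
  | zero => simp [natZ, ZFSet.toSet_empty]
  | succ n ih => rw [natZ, ZFSet.toSet_insert]; exact ih.insert _

/-- A ZFSet from a list. -/
def listZ : List ZFSet → ZFSet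
  | [] => ∅
  | a :: l => insert a (listZ l)

lemma mem_listZ {z : ZFSet} {l : List ZFSet} : z ∈ listZ l ↔ z ∈ l := by
  induction l with
  | nil => simp [listZ, ZFSet.notMem_empty]
  | cons a l ih => simp [listZ, ZFSet.mem_insert_iff, ih]

section CTM
variable {M : ZFSet} (hM : IsCTM M)
include hM

lemma memM_of_mem {x y : ZFSet} (hx : x ∈ M) (h : y ∈ x) : y ∈ M :=
  hM.transitive.mem_trans h hx

lemma sing_memM {x : ZFSet} (hx : x ∈ M) : ({x} : ZFSet) ∈ M := by
  have := hM.pairing x hx x hx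
  rwa [ZFSet.pair_eq_singleton] at this

lemma union2_memM {x y : ZFSet} (hx : x ∈ M) (hy : y ∈ M) : x ∪ y ∈ M := by
  have h1 : ({x, y} : ZFSet) ∈ M := hM.pairing x hx y hy
  have h2 := hM.union _ h1
  have : (ZFSet.sUnion ({x, y} : ZFSet) : ZFSet) = x ∪ y := by
    apply ZFSet.ext; intro z
    simp only [ZFSet.mem_sUnion, ZFSet.mem_pair, ZFSet.mem_union]
    constructor
    · rintro ⟨w, (rfl | rfl), h⟩
      · exact Or.inl h
      · exact Or.inr h
    · rintro (h | h)
      · exact ⟨x, Or.inl rfl, h⟩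
      · exact ⟨y, Or.inr rfl, h⟩
  rwa [this] at h2

lemma insert_memM {x s : ZFSet} (hx : x ∈ M) (hs : s ∈ M) : insert x s ∈ M := by
  have h1 : ({x} : ZFSet) ∪ s ∈ M := union2_memM hM (sing_memM hM hx) hs
  have : ({x} : ZFSet) ∪ s = insert x s := by
    apply ZFSet.ext; intro z
    simp [ZFSet.mem_union, ZFSet.mem_insert_iff, ZFSet.mem_singleton]
  rwa [this] at h1

lemma listZ_memM {l : List ZFSet} (h : ∀ y ∈ l, y ∈ M) : listZ l ∈ M := by
  induction l with
  | nil => exact hM.empty_mem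
  | cons a l ih =>
    exact insert_memM hM (h a (by simp)) (ih (fun y hy => h y (by simp [hy])))

lemma finite_memM {x : ZFSet} (hfin : x.toSet.Finite) (h : ∀ y ∈ x, y ∈ M) : x ∈ M := by
  classical
  obtain ⟨l, hl⟩ : ∃ l : List ZFSet, ∀ z, z ∈ l ↔ z ∈ x := by
    refine ⟨hfin.toFinset.toList, fun z => ?_⟩
    simp [Set.Finite.mem_toFinset, ZFSet.mem_toSet]
  have : listZ l = x := by
    apply ZFSet.ext; intro z; rw [mem_listZ, hl]
  rw [← this]
  exact listZ_memM hM (fun y hy => h y ((hl y).1 hy))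

lemma pairZ_memM {x y : ZFSet} (hx : x ∈ M) (hy : y ∈ M) : ZFSet.pair x y ∈ M := by
  exact hM.pairing _ (sing_memM hM hx) _ (hM.pairing x hx y hy)

lemma natZ_memM (n : ℕ) : natZ n ∈ M :=
  memM_of_mem hM hM.infinity (natZ_mem_omega n)

lemma omega_subM {x : ZFSet} (h : x ∈ ZFSet.omega) : x ∈ M :=
  memM_of_mem hM hM.infinity h

end CTM
/-! ### Section 2: definability framework -/

namespace CFml

/-- Relabelling of variables. -/
def relabel : ∀ {κ m n : ℕ}, (Fin m → Fin n) → CFml κ m → CFml κ n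
  | _, _, _, ρ, .mem i j => .mem (ρ i) (ρ j)
  | _, _, _, ρ, .eq i j => .eq (ρ i) (ρ j)
  | _, _, _, ρ, .cls X i => .cls X (ρ i)
  | _, _, _, ρ, .not φ => .not (relabel ρ φ)
  | _, _, _, ρ, .or φ ψ => .or (relabel ρ φ) (relabel ρ ψ)
  | _, _, _, ρ, .ex φ => .ex (relabel (Fin.snoc (Fin.castSucc ∘ ρ) (Fin.last _)) φ)

lemma snoc_comp_snoc {m n : ℕ} (ρ : Fin m → Fin n) (v : Fin n → ZFSet) (x : ZFSet) :
    (Fin.snoc v x : Fin (n+1) → ZFSet) ∘ (Fin.snoc (Fin.castSucc ∘ ρ) (Fin.last n) : Fin (m+1) → Fin (n+1)) =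
      Fin.snoc (v ∘ ρ) x := by
  funext i
  refine Fin.lastCases ?_ (fun j => ?_) i <;>
    simp [Fin.snoc_castSucc, Fin.snoc_last]

lemma sat_relabel {D : Set ZFSet} : ∀ {κ m n : ℕ} (Γ : Fin κ → Set ZFSet)
    (ρ : Fin m → Fin n) (φ : CFml κ m) (v : Fin n → ZFSet),
    SatC D Γ (relabel ρ φ) v ↔ SatC D Γ φ (v ∘ ρ)
  | _, _, _, _, _, .mem i j, v => by simp [relabel, SatC, Function.comp]
  | _, _, _, _, _, .eq i j, v => by simp [relabel, SatC, Function.comp]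
  | _, _, _, _, _, .cls X i, v => by simp [relabel, SatC, Function.comp]
  | _, _, _, Γ, ρ, .not φ, v => by
      simpa [relabel, SatC] using (sat_relabel Γ ρ φ v).not
  | _, _, _, Γ, ρ, .or φ ψ, v => by
      simpa [relabel, SatC] using or_congr (sat_relabel Γ ρ φ v) (sat_relabel Γ ρ ψ v)
  | _, _, _, Γ, ρ, .ex φ, v => by
      simp only [relabel, SatC]
      refine exists_congr fun x => and_congr_right fun _ => ?_
      rw [sat_relabel, snoc_comp_snoc]

/-- Conjunction. -/
def and {κ n : ℕ} (φ ψ : CFml κ n) : CFml κ n := .not (.or (.not φ) (.not ψ))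

/-- Implication. -/
def imp {κ n : ℕ} (φ ψ : CFml κ n) : CFml κ n := .or (.not φ) ψ

/-- Biconditional. -/
def iffF {κ n : ℕ} (φ ψ : CFml κ n) : CFml κ n := and (imp φ ψ) (imp ψ φ)

/-- Universal quantifier. -/
def all {κ n : ℕ} (φ : CFml κ (n+1)) : CFml κ n := .not (.ex (.not φ))

variable {D : Set ZFSet} {κ n : ℕ} {Γ : Fin κ → Set ZFSet}

@[simp] lemma sat_and {φ ψ : CFml κ n} {v : Fin n → ZFSet} :
    SatC D Γ (and φ ψ) v ↔ SatC D Γ φ v ∧ SatC D Γ ψ v := by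
  simp [and, SatC]

@[simp] lemma sat_imp {φ ψ : CFml κ n} {v : Fin n → ZFSet} :
    SatC D Γ (imp φ ψ) v ↔ (SatC D Γ φ v → SatC D Γ ψ v) := by
  simp [imp, SatC]; tauto

@[simp] lemma sat_iff {φ ψ : CFml κ n} {v : Fin n → ZFSet} :
    SatC D Γ (iffF φ ψ) v ↔ (SatC D Γ φ v ↔ SatC D Γ ψ v) := by
  simp [iffF]; tauto

@[simp] lemma sat_all {φ : CFml κ (n+1)} {v : Fin n → ZFSet} :
    SatC D Γ (all φ) v ↔ ∀ x ∈ D, SatC D Γ φ (Fin.snoc v x) := by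
  simp [all, SatC]

@[simp] lemma sat_not {φ : CFml κ n} {v : Fin n → ZFSet} :
    SatC D Γ (.not φ) v ↔ ¬ SatC D Γ φ v := by simp [SatC]

@[simp] lemma sat_or {φ ψ : CFml κ n} {v : Fin n → ZFSet} :
    SatC D Γ (.or φ ψ) v ↔ SatC D Γ φ v ∨ SatC D Γ ψ v := by simp [SatC]

@[simp] lemma sat_ex {φ : CFml κ (n+1)} {v : Fin n → ZFSet} :
    SatC D Γ (.ex φ) v ↔ ∃ x ∈ D, SatC D Γ φ (Fin.snoc v x) := by simp [SatC]

@[simp] lemma sat_mem {i j : Fin n} {v : Fin n → ZFSet} :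
    SatC D Γ (.mem (κ := κ) i j) v ↔ v i ∈ v j := by simp [SatC]

@[simp] lemma sat_eq {i j : Fin n} {v : Fin n → ZFSet} :
    SatC D Γ (.eq (κ := κ) i j) v ↔ v i = v j := by simp [SatC]

end CFml

/-- `P` is an `n`-ary relation definable over `(M,∈)` by a pure `∈`-formula,
in the sense that some formula defines it on tuples from `M`. -/
def IsDef (M : ZFSet) {n : ℕ} (P : (Fin n → ZFSet) → Prop) : Prop :=
  ∃ φ : Fml n, ∀ v : Fin n → ZFSet, (∀ i, v i ∈ M) → (P v ↔ Sat M φ v)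

namespace IsDef

variable {M : ZFSet} {n : ℕ}

lemma congr {P Q : (Fin n → ZFSet) → Prop} (h : IsDef M P)
    (hpq : ∀ v, (∀ i, v i ∈ M) → (P v ↔ Q v)) : IsDef M Q := by
  obtain ⟨φ, hφ⟩ := h
  exact ⟨φ, fun v hv => (hpq v hv).symm.trans (hφ v hv)⟩

lemma mem (i j : Fin n) : IsDef M fun v => v i ∈ v j :=
  ⟨.mem i j, fun v _ => by simp [Sat, SatC]⟩

lemma eq (i j : Fin n) : IsDef M fun v => v i = v j :=
  ⟨.eq i j, fun v _ => by simp [Sat, SatC]⟩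

lemma not {P : (Fin n → ZFSet) → Prop} (h : IsDef M P) : IsDef M fun v => ¬ P v := by
  obtain ⟨φ, hφ⟩ := h
  exact ⟨.not φ, fun v hv => by show ¬ P v ↔ _; rw [hφ v hv]; exact (CFml.sat_not).symm⟩

lemma and {P Q : (Fin n → ZFSet) → Prop} (hP : IsDef M P) (hQ : IsDef M Q) :
    IsDef M fun v => P v ∧ Q v := by
  obtain ⟨φ, hφ⟩ := hP; obtain ⟨ψ, hψ⟩ := hQ
  exact ⟨CFml.and φ ψ, fun v hv => by show P v ∧ Q v ↔ _; rw [hφ v hv, hψ v hv]; exact (CFml.sat_and).symm⟩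

lemma or {P Q : (Fin n → ZFSet) → Prop} (hP : IsDef M P) (hQ : IsDef M Q) :
    IsDef M fun v => P v ∨ Q v := by
  obtain ⟨φ, hφ⟩ := hP; obtain ⟨ψ, hψ⟩ := hQ
  exact ⟨.or φ ψ, fun v hv => by show P v ∨ Q v ↔ _; rw [hφ v hv, hψ v hv]; exact (CFml.sat_or).symm⟩

lemma imp {P Q : (Fin n → ZFSet) → Prop} (hP : IsDef M P) (hQ : IsDef M Q) :
    IsDef M fun v => P v → Q v := by
  obtain ⟨φ, hφ⟩ := hP; obtain ⟨ψ, hψ⟩ := hQ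
  exact ⟨CFml.imp φ ψ, fun v hv => by show (P v → Q v) ↔ _; rw [hφ v hv, hψ v hv]; exact (CFml.sat_imp).symm⟩

lemma iff {P Q : (Fin n → ZFSet) → Prop} (hP : IsDef M P) (hQ : IsDef M Q) :
    IsDef M fun v => (P v ↔ Q v) := by
  obtain ⟨φ, hφ⟩ := hP; obtain ⟨ψ, hψ⟩ := hQ
  exact ⟨CFml.iffF φ ψ, fun v hv => by show (P v ↔ Q v) ↔ _; rw [hφ v hv, hψ v hv]; exact (CFml.sat_iff).symm⟩

lemma snoc_mem_of {v : Fin n → ZFSet} {x : ZFSet} (hv : ∀ i, v i ∈ M) (hx : x ∈ M) :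
    ∀ i, (Fin.snoc v x : Fin (n+1) → ZFSet) i ∈ M := by
  intro i
  refine Fin.lastCases ?_ (fun j => ?_) i <;> simp [Fin.snoc_castSucc, Fin.snoc_last, hv, hx]

lemma exM {P : (Fin (n+1) → ZFSet) → Prop} (h : IsDef M P) :
    IsDef M fun v : Fin n → ZFSet => ∃ x ∈ M, P (Fin.snoc v x) := by
  obtain ⟨φ, hφ⟩ := h
  refine ⟨.ex φ, fun v hv => ?_⟩
  simp only [Sat, CFml.sat_ex]
  constructor
  · rintro ⟨x, hx, hP⟩
    exact ⟨x, (ZFSet.mem_toSet x M).2 hx, ((hφ _ (snoc_mem_of hv hx)).1 hP : _)⟩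
  · rintro ⟨x, hx, hS⟩
    have hx' := (ZFSet.mem_toSet x M).1 hx
    exact ⟨x, hx', (hφ _ (snoc_mem_of hv hx')).2 hS⟩

lemma allM {P : (Fin (n+1) → ZFSet) → Prop} (h : IsDef M P) :
    IsDef M fun v : Fin n → ZFSet => ∀ x ∈ M, P (Fin.snoc v x) := by
  have h1 := (h.not.exM).not
  refine h1.congr fun v hv => ?_
  constructor
  · rintro hne x hx
    by_contra hc; exact hne ⟨x, hx, hc⟩
  · rintro hall ⟨x, hx, hc⟩
    exact hc (hall x hx)

lemma comp {m : ℕ} (ρ : Fin m → Fin n) {P : (Fin m → ZFSet) → Prop} (h : IsDef M P) :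
    IsDef M fun v : Fin n → ZFSet => P (v ∘ ρ) := by
  obtain ⟨φ, hφ⟩ := h
  refine ⟨CFml.relabel ρ φ, fun v hv => ?_⟩
  rw [Sat, CFml.sat_relabel]
  exact hφ (v ∘ ρ) fun i => hv (ρ i)

end IsDef
/-! ### Section 3: atomic definable predicates -/

section Atoms

variable {M : ZFSet}

lemma isDef_eqDoub (hM : IsCTM M) {n : ℕ} (i j k : Fin n) :
    IsDef M fun v => v k = ({v i, v j} : ZFSet) := by
  have h0 : IsDef M fun v : Fin (n+1) → ZFSet =>
      (v (Fin.last n) ∈ v k.castSucc ↔ (v (Fin.last n) = v i.castSucc ∨ v (Fin.last n) = v j.castSucc)) :=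
    (IsDef.mem _ _).iff ((IsDef.eq _ _).or (IsDef.eq _ _))
  refine h0.allM.congr fun v hv => ?_
  simp only [Fin.snoc_last, Fin.snoc_castSucc]
  constructor
  · intro hall
    apply ZFSet.ext; intro z
    rw [ZFSet.mem_pair]
    constructor
    · intro hz
      exact (hall z (memM_of_mem hM (hv k) hz)).1 hz
    · rintro (rfl | rfl)
      · exact (hall _ (hv i)).2 (Or.inl rfl)
      · exact (hall _ (hv j)).2 (Or.inr rfl)
  · rintro hk x _
    rw [hk, ZFSet.mem_pair]

lemma isDef_eqSing (hM : IsCTM M) {n : ℕ} (i k : Fin n) :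
    IsDef M fun v => v k = ({v i} : ZFSet) := by
  refine (isDef_eqDoub hM i i k).congr fun v hv => ?_
  rw [ZFSet.pair_eq_singleton]

lemma isDef_eqEmpty (hM : IsCTM M) {n : ℕ} (k : Fin n) :
    IsDef M fun v => v k = (∅ : ZFSet) := by
  have h0 : IsDef M fun v : Fin (n+1) → ZFSet => ¬ (v (Fin.last n) ∈ v k.castSucc) :=
    (IsDef.mem _ _).not
  refine h0.allM.congr fun v hv => ?_
  simp only [Fin.snoc_last, Fin.snoc_castSucc]
  constructor
  · intro hall
    rw [ZFSet.eq_empty]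
    intro y hy
    exact hall y (memM_of_mem hM (hv k) hy) hy
  · intro hk x _ hx
    rw [hk] at hx
    exact ZFSet.notMem_empty _ hx

lemma isDef_eqPair (hM : IsCTM M) {n : ℕ} (i j k : Fin n) :
    IsDef M fun v => v k = ZFSet.pair (v i) (v j) := by
  have h0 : IsDef M fun v : Fin (n+2) → ZFSet =>
      v (Fin.last n).castSucc = ({v i.castSucc.castSucc} : ZFSet) ∧
      v (Fin.last (n+1)) = ({v i.castSucc.castSucc, v j.castSucc.castSucc} : ZFSet) ∧
      v k.castSucc.castSucc = ({v (Fin.last n).castSucc, v (Fin.last (n+1))} : ZFSet) :=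
    (isDef_eqSing hM _ _).and ((isDef_eqDoub hM _ _ _).and (isDef_eqDoub hM _ _ _))
  refine h0.exM.exM.congr fun v hv => ?_
  simp only [Fin.snoc_last, Fin.snoc_castSucc]
  constructor
  · rintro ⟨u, hu, w, hw, rfl, rfl, hk⟩
    exact hk
  · intro hk
    exact ⟨{v i}, sing_memM hM (hv i), {v i, v j}, hM.pairing _ (hv i) _ (hv j), rfl, rfl, hk⟩

lemma isDef_memPair (hM : IsCTM M) {n : ℕ} (i j k : Fin n) :
    IsDef M fun v => ZFSet.pair (v i) (v j) ∈ v k := by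
  have h0 : IsDef M fun v : Fin (n+1) → ZFSet =>
      v (Fin.last n) = ZFSet.pair (v i.castSucc) (v j.castSucc) ∧ v (Fin.last n) ∈ v k.castSucc :=
    (isDef_eqPair hM _ _ _).and (IsDef.mem _ _)
  refine h0.exM.congr fun v hv => ?_
  simp only [Fin.snoc_last, Fin.snoc_castSucc]
  constructor
  · rintro ⟨x, hx, rfl, hm⟩; exact hm
  · intro hm; exact ⟨_, pairZ_memM hM (hv i) (hv j), rfl, hm⟩

lemma isDef_eqTriple (hM : IsCTM M) {n : ℕ} (i j k l : Fin n) :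
    IsDef M fun v => v l = tripleZ (v i) (v j) (v k) := by
  have h0 : IsDef M fun v : Fin (n+1) → ZFSet =>
      v (Fin.last n) = ZFSet.pair (v j.castSucc) (v k.castSucc) ∧
      v l.castSucc = ZFSet.pair (v i.castSucc) (v (Fin.last n)) :=
    (isDef_eqPair hM _ _ _).and (isDef_eqPair hM _ _ _)
  refine h0.exM.congr fun v hv => ?_
  simp only [Fin.snoc_last, Fin.snoc_castSucc]
  constructor
  · rintro ⟨x, hx, rfl, hl⟩; exact hl
  · intro hl
    exact ⟨_, pairZ_memM hM (hv j) (hv k), rfl, hl⟩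

end Atoms
/-! ### Section 4: Friedman forcing combinatorics -/

/-- First component of a Kuratowski pair (junk otherwise). -/
noncomputable def fstZ (x : ZFSet) : ZFSet :=
  if h : ∃ a b : ZFSet, x = ZFSet.pair a b then h.choose else ∅

/-- Second component of a Kuratowski pair (junk otherwise). -/
noncomputable def sndZ (x : ZFSet) : ZFSet :=
  if h : ∃ a b : ZFSet, x = ZFSet.pair a b then h.choose_spec.choose else ∅

lemma fstZ_pair (a b : ZFSet) : fstZ (ZFSet.pair a b) = a := by
  have h : ∃ a' b' : ZFSet, ZFSet.pair a b = ZFSet.pair a' b' := ⟨a, b, rfl⟩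
  rw [fstZ, dif_pos h]
  exact (ZFSet.pair_injective h.choose_spec.choose_spec.symm).1

lemma sndZ_pair (a b : ZFSet) : sndZ (ZFSet.pair a b) = b := by
  have h : ∃ a' b' : ZFSet, ZFSet.pair a b = ZFSet.pair a' b' := ⟨a, b, rfl⟩
  rw [sndZ, dif_pos h]
  exact (ZFSet.pair_injective h.choose_spec.choose_spec.symm).2

lemma tripleZ_injective {d e f d' e' f' : ZFSet} (h : tripleZ d e f = tripleZ d' e' f') :
    d = d' ∧ e = e' ∧ f = f' := by
  obtain ⟨h1, h2⟩ := ZFSet.pair_injective h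
  obtain ⟨h3, h4⟩ := ZFSet.pair_injective h2
  exact ⟨h1, h3, h4⟩

section Acyclic

variable {d e : ZFSet}

lemma edge_mem_left (he : ∀ x ∈ e, ∃ a ∈ d, ∃ b ∈ d, x = ZFSet.pair a b)
    {a b : ZFSet} (h : ZFSet.pair a b ∈ e) : a ∈ d ∧ b ∈ d := by
  obtain ⟨a', ha', b', hb', hab⟩ := he _ h
  obtain ⟨h1, h2⟩ := ZFSet.pair_injective hab
  rw [h1, h2]; exact ⟨ha', hb'⟩

lemma transGen_mem_d (he : ∀ x ∈ e, ∃ a ∈ d, ∃ b ∈ d, x = ZFSet.pair a b)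
    {x a : ZFSet} (h : Relation.TransGen (fun u v => ZFSet.pair u v ∈ e) x a) : x ∈ d := by
  induction h with
  | single h => exact (edge_mem_left he h).1
  | tail _ _ ih => exact ih

lemma acyclic_wf (he : ∀ x ∈ e, ∃ a ∈ d, ∃ b ∈ d, x = ZFSet.pair a b)
    (hfin : d.toSet.Finite) (hacyc : acyclicZ e) :
    WellFounded (fun a b : ZFSet => ZFSet.pair a b ∈ e) := by
  set r := fun a b : ZFSet => ZFSet.pair a b ∈ e with hr
  have hpred : ∀ a : ZFSet, {x | Relation.TransGen r x a} ⊆ d.toSet := by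
    intro a x hx
    exact transGen_mem_d he hx
  have hfinpred : ∀ a : ZFSet, {x | Relation.TransGen r x a}.Finite :=
    fun a => hfin.subset (hpred a)
  have key : ∀ N : ℕ, ∀ a : ZFSet, {x | Relation.TransGen r x a}.ncard ≤ N → Acc r a := by
    intro N
    induction N with
    | zero =>
      intro a ha
      constructor
      intro b hb
      exfalso
      have hmem : b ∈ {x | Relation.TransGen r x a} := Relation.TransGen.single hb
      have := Set.ncard_eq_zero (hfinpred a) |>.symm
      have hpos : 0 < {x | Relation.TransGen r x a}.ncard :=
        Set.ncard_pos (hfinpred a) |>.2 ⟨b, hmem⟩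
      omega
    | succ N ih =>
      intro a ha
      constructor
      intro b hb
      apply ih
      have hsub : {x | Relation.TransGen r x b} ⊆ {x | Relation.TransGen r x a} :=
        fun x hx => Relation.TransGen.tail hx hb
      have hss : {x | Relation.TransGen r x b} ⊂ {x | Relation.TransGen r x a} := by
        refine ⟨hsub, fun hss => hacyc b (hss (Relation.TransGen.single hb))⟩
      have := Set.ncard_lt_ncard hss (hfinpred a)
      omega
  exact ⟨fun a => key _ a le_rfl⟩

lemma acyclicZ_iff_min (he : ∀ x ∈ e, ∃ a ∈ d, ∃ b ∈ d, x = ZFSet.pair a b)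
    (hfin : d.toSet.Finite) :
    acyclicZ e ↔ ∀ s : ZFSet, (∀ y ∈ s, y ∈ d) → s ≠ ∅ →
      ∃ a ∈ s, ∀ b ∈ s, ZFSet.pair b a ∉ e := by
  constructor
  · intro hacyc s _ hs
    have hwf := acyclic_wf he hfin hacyc
    have hne : s.toSet.Nonempty := by
      rcases ZFSet.eq_empty_or_nonempty s with rfl | ⟨x, hx⟩
      · exact absurd rfl hs
      · exact ⟨x, hx⟩
    obtain ⟨a, ha, hmin⟩ := hwf.has_min s.toSet hne
    exact ⟨a, ha, fun b hb => hmin b hb⟩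
  · intro hmin a ha
    set r := fun u v : ZFSet => ZFSet.pair u v ∈ e with hr
    set s := ZFSet.sep (fun b => Relation.TransGen r b a ∧ Relation.TransGen r a b) d with hsdef
    have had : a ∈ d := transGen_mem_d he ha
    have has : a ∈ s := by rw [hsdef, ZFSet.mem_sep]; exact ⟨had, ha, ha⟩
    have hsne : s ≠ ∅ := by
      intro h; rw [h] at has; exact ZFSet.notMem_empty _ has
    obtain ⟨m, hm, hminm⟩ := hmin s (fun y hy => (ZFSet.mem_sep.1 hy).1) hsne
    rw [hsdef, ZFSet.mem_sep] at hm
    obtain ⟨hmd, hma, ham⟩ := hm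
    -- find the last edge of the path a → … → m
    obtain ⟨c, hc1, hc2⟩ : ∃ c, (Relation.TransGen r a c ∨ c = a) ∧ r c m := by
      cases ham with
      | single h => exact ⟨a, Or.inr rfl, h⟩
      | tail h1 h2 => exact ⟨_, Or.inl h1, h2⟩
    have hcs : c ∈ s := by
      rw [hsdef, ZFSet.mem_sep]
      refine ⟨(edge_mem_left he hc2).1, Relation.TransGen.head hc2 hma, ?_⟩
      rcases hc1 with h | rfl
      · exact h
      · exact ha
    exact hminm c hcs hc2

end Acyclic

lemma bounded_iff_finite {d : ZFSet} (hd : ∀ u ∈ d, u ∈ ZFSet.omega) :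
    (∃ k ∈ ZFSet.omega, ∀ u ∈ d, u ∈ k) ↔ d.toSet.Finite := by
  constructor
  · rintro ⟨k, hk, hbd⟩
    obtain ⟨N, rfl⟩ := mem_omega_iff.1 hk
    exact (natZ_toSet_finite N).subset fun u hu => hbd u hu
  · intro hfin
    have hS : {m : ℕ | natZ m ∈ d}.Finite := by
      have : {m : ℕ | natZ m ∈ d} = natZ ⁻¹' d.toSet := rfl
      rw [this]
      exact Set.Finite.preimage (Set.injOn_of_injective natZ_inj) hfin
    obtain ⟨N, hN⟩ := hS.bddAbove
    refine ⟨natZ (N + 1), natZ_mem_omega _, fun u hu => ?_⟩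
    obtain ⟨m, rfl⟩ := mem_omega_iff.1 (hd u hu)
    have : m ≤ N := hN (by exact hu)
    exact natZ_mem_of_lt (by omega)

section FCondFacts

variable {M d e f : ZFSet}

lemma FCond.e_fin (hc : FCond M d e f) : e.toSet.Finite := by
  have : e.toSet ⊆ (fun p : ZFSet × ZFSet => ZFSet.pair p.1 p.2) '' (d.toSet ×ˢ d.toSet) := by
    intro x hx
    obtain ⟨a, ha, b, hb, rfl⟩ := hc.e_sub x hx
    exact ⟨(a, b), ⟨ha, hb⟩, rfl⟩
  exact ((hc.d_fin.prod hc.d_fin).image _).subset this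

lemma FCond.f_fin (hc : FCond M d e f) : f.toSet.Finite := by
  rcases hc.f_dom with hdom | hdom
  · have : f.toSet ⊆ ∅ := by
      intro x hx
      obtain ⟨a, b, rfl⟩ := hc.f_fun.1 x hx
      have : a ∈ domZ f := ⟨b, hx⟩
      rw [hdom] at this
      exact this.elim
    exact Set.Finite.subset (Set.finite_empty) this
  · apply Set.Finite.of_finite_image (f := fstZ)
    · apply hc.d_fin.subset
      rintro y ⟨x, hx, rfl⟩
      obtain ⟨a, b, rfl⟩ := hc.f_fun.1 x hx
      rw [fstZ_pair]
      have : a ∈ domZ f := ⟨b, hx⟩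
      rwa [hdom] at this
    · intro x hx y hy hxy
      obtain ⟨a, b, rfl⟩ := hc.f_fun.1 x hx
      obtain ⟨a', b', rfl⟩ := hc.f_fun.1 y hy
      rw [fstZ_pair, fstZ_pair] at hxy
      subst hxy
      rw [hc.f_fun.2 a b b' hx hy]

lemma FCond.memM (hM : IsCTM M) (hc : FCond M d e f) : tripleZ d e f ∈ M := by
  have hdM : d ∈ M := finite_memM hM hc.d_fin fun y hy => omega_subM hM (hc.d_sub y hy)
  have heM : e ∈ M := by
    refine finite_memM hM hc.e_fin fun y hy => ?_
    obtain ⟨a, ha, b, hb, rfl⟩ := hc.e_sub y hy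
    exact pairZ_memM hM (omega_subM hM (hc.d_sub a ha)) (omega_subM hM (hc.d_sub b hb))
  have hfM : f ∈ M := by
    refine finite_memM hM hc.f_fin fun y hy => ?_
    obtain ⟨a, b, rfl⟩ := hc.f_fun.1 y hy
    have hb : b ∈ M := hc.f_ran b ⟨a, hy⟩
    have ha : a ∈ M := by
      have hadom : a ∈ domZ f := ⟨b, hy⟩
      rcases hc.f_dom with hdom | hdom
      · rw [hdom] at hadom; exact hadom.elim
      · rw [hdom] at hadom
        exact omega_subM hM (hc.d_sub a hadom)
    exact pairZ_memM hM ha hb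
  exact pairZ_memM hM hdM (pairZ_memM hM heM hfM)

lemma friedmanP_subM (hM : IsCTM M) {p : ZFSet} (hp : p ∈ FriedmanP M) : p ∈ M := by
  obtain ⟨d, e, f, hc, rfl⟩ := hp
  exact hc.memM hM
end FCondFacts
/-! ### Section 5: realization and extension of Friedman conditions -/

attribute [local instance] Classical.allZFSetDefinable

/-- Tag sets used to realize acyclic relations in `M`. -/
def tagZ (x : ZFSet) : ZFSet := insert ∅ (ZFSet.pair ZFSet.omega x)

lemma empty_mem_tagZ (x : ZFSet) : ∅ ∈ tagZ x := ZFSet.mem_insert _ _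

lemma tagZ_ne_empty (x : ZFSet) : tagZ x ≠ ∅ := by
  intro h
  have := empty_mem_tagZ x
  rw [h] at this
  exact ZFSet.notMem_empty _ this

lemma empty_not_mem_pairZ (a b : ZFSet) : ∅ ∉ ZFSet.pair a b := by
  intro h
  rw [ZFSet.pair, ZFSet.mem_pair] at h
  rcases h with h | h
  · exact ZFSet.notMem_empty a (h ▸ ZFSet.mem_singleton.2 rfl)
  · exact ZFSet.notMem_empty a (h ▸ ZFSet.mem_pair.2 (Or.inl rfl))

lemma tagZ_injective {x y : ZFSet} (h : tagZ x = tagZ y) : x = y := by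
  have hp : ZFSet.pair ZFSet.omega x = ZFSet.pair ZFSet.omega y := by
    apply ZFSet.ext
    intro z
    constructor
    · intro hz
      have hz' : z ∈ tagZ y := h ▸ ZFSet.mem_insert_of_mem _ hz
      rcases ZFSet.mem_insert_iff.1 hz' with rfl | hz''
      · exact absurd hz (empty_not_mem_pairZ _ _)
      · exact hz''
    · intro hz
      have hz' : z ∈ tagZ x := h ▸ ZFSet.mem_insert_of_mem _ hz
      rcases ZFSet.mem_insert_iff.1 hz' with rfl | hz''
      · exact absurd hz (empty_not_mem_pairZ _ _)
      · exact hz''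
  exact (ZFSet.pair_injective hp).2

lemma tagZ_memM {M : ZFSet} (hM : IsCTM M) {x : ZFSet} (hx : x ∈ M) : tagZ x ∈ M :=
  insert_memM hM hM.empty_mem (pairZ_memM hM hM.infinity hx)

section Realize

variable {d e : ZFSet} (hwf : WellFounded fun a b : ZFSet => ZFSet.pair a b ∈ e)

/-- Exact realization of a finite acyclic relation by sets. -/
noncomputable def realizeF : ZFSet → ZFSet :=
  hwf.fix fun i ih =>
    insert (tagZ i)
      (ZFSet.image (fun j => if h : ZFSet.pair j i ∈ e then ih j h else ∅)
        (ZFSet.sep (fun j => ZFSet.pair j i ∈ e) d))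

lemma mem_realizeF {z i : ZFSet} :
    z ∈ realizeF (d := d) hwf i ↔
      z = tagZ i ∨ ∃ j, (ZFSet.pair j i ∈ e ∧ j ∈ d) ∧ z = realizeF (d := d) hwf j := by
  conv_lhs => rw [realizeF, WellFounded.fix_eq]
  rw [ZFSet.mem_insert_iff]
  apply or_congr Iff.rfl
  rw [ZFSet.mem_image]
  constructor
  · rintro ⟨j, hj, rfl⟩
    rw [ZFSet.mem_sep] at hj
    rw [dif_pos hj.2]
    exact ⟨j, ⟨hj.2, hj.1⟩, rfl⟩
  · rintro ⟨j, ⟨hj, hjd⟩, rfl⟩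
    refine ⟨j, ZFSet.mem_sep.2 ⟨hjd, hj⟩, ?_⟩
    rw [dif_pos hj]
    rfl

lemma tagZ_mem_realizeF (i : ZFSet) : tagZ i ∈ realizeF (d := d) hwf i :=
  (mem_realizeF hwf).2 (Or.inl rfl)

lemma realizeF_ne_empty (i : ZFSet) : realizeF (d := d) hwf i ≠ ∅ := by
  intro h
  have := tagZ_mem_realizeF hwf (d := d) i
  rw [h] at this
  exact ZFSet.notMem_empty _ this

lemma empty_not_mem_realizeF (i : ZFSet) : ∅ ∉ realizeF (d := d) hwf i := by
  intro h
  rcases (mem_realizeF hwf).1 h with h | ⟨j, _, h⟩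
  · exact tagZ_ne_empty i h.symm
  · exact realizeF_ne_empty hwf j h.symm

lemma realizeF_ne_tagZ (i x : ZFSet) : realizeF (d := d) hwf i ≠ tagZ x := by
  intro h
  have := empty_mem_tagZ x
  rw [← h] at this
  exact empty_not_mem_realizeF hwf i this

lemma realizeF_injective {i j : ZFSet} (h : realizeF (d := d) hwf i = realizeF (d := d) hwf j) :
    i = j := by
  have hti : tagZ i ∈ realizeF (d := d) hwf j := h ▸ tagZ_mem_realizeF hwf i
  rcases (mem_realizeF hwf).1 hti with h' | ⟨k, _, h'⟩
  · exact tagZ_injective h'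
  · exact absurd h'.symm (realizeF_ne_tagZ hwf k i)

lemma realizeF_mem_iff {i j : ZFSet} :
    realizeF (d := d) hwf i ∈ realizeF (d := d) hwf j ↔ ZFSet.pair i j ∈ e ∧ i ∈ d := by
  constructor
  · intro h
    rcases (mem_realizeF hwf).1 h with h' | ⟨k, hk, h'⟩
    · exact absurd h' (realizeF_ne_tagZ hwf i j)
    · rwa [realizeF_injective hwf h']
  · intro ⟨he', hd'⟩
    exact (mem_realizeF hwf).2 (Or.inr ⟨i, ⟨he', hd'⟩, rfl⟩)

lemma realizeF_toSet_finite (hfin : d.toSet.Finite) (i : ZFSet) :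
    (realizeF (d := d) hwf i).toSet.Finite := by
  have hsub : (realizeF (d := d) hwf i).toSet ⊆
      insert (tagZ i) ((realizeF (d := d) hwf) '' d.toSet) := by
    intro z hz
    rcases (mem_realizeF hwf).1 hz with rfl | ⟨j, ⟨_, hjd⟩, rfl⟩
    · exact Set.mem_insert _ _
    · exact Set.mem_insert_of_mem _ ⟨j, hjd, rfl⟩
  exact ((hfin.image _).insert _).subset hsub

lemma realizeF_memM {M : ZFSet} (hM : IsCTM M) (hfin : d.toSet.Finite)
    (hdM : ∀ j ∈ d, j ∈ M) :
    ∀ i : ZFSet, i ∈ M → realizeF (d := d) hwf i ∈ M := by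
  intro i
  induction i using hwf.induction with
  | _ i ih =>
    intro hiM
    refine finite_memM hM (realizeF_toSet_finite hwf hfin i) ?_
    intro z hz
    rcases (mem_realizeF hwf).1 hz with rfl | ⟨j, ⟨hje, hjd⟩, rfl⟩
    · exact tagZ_memM hM hiM
    · exact ih j hje (hdM j hjd)

end Realize

/-- The value of a set-coded function. -/
noncomputable def fvalZ (f i : ZFSet) : ZFSet :=
  if h : ∃ b, ZFSet.pair i b ∈ f then h.choose else ∅

lemma fvalZ_spec {f i : ZFSet} (h : ∃ b, ZFSet.pair i b ∈ f) :
    ZFSet.pair i (fvalZ f i) ∈ f := by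
  rw [fvalZ, dif_pos h]
  exact h.choose_spec

lemma fvalZ_eq {f i b : ZFSet} (hfun : isFuncZ f) (h : ZFSet.pair i b ∈ f) :
    fvalZ f i = b := by
  have hex : ∃ b, ZFSet.pair i b ∈ f := ⟨b, h⟩
  exact hfun.2 i _ b (fvalZ_spec hex) h

lemma ranZ_finite {f : ZFSet} (hfun : isFuncZ f) (hfin : f.toSet.Finite) :
    (ranZ f).Finite := by
  have : ranZ f ⊆ sndZ '' f.toSet := by
    rintro b ⟨a, hab⟩
    exact ⟨ZFSet.pair a b, hab, sndZ_pair a b⟩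
  exact (hfin.image _).subset this
/-! ### Section 6: extension lemmas and density -/

attribute [local instance] Classical.allZFSetDefinable

lemma wf_not_self {α : Type*} {r : α → α → Prop} (h : WellFounded r) (a : α) : ¬ r a a := by
  intro ha
  obtain ⟨m, hm, hmin⟩ := h.has_min {a} ⟨a, rfl⟩
  rw [Set.mem_singleton_iff] at hm
  subst hm
  exact hmin m rfl ha

lemma acyclic_of_val {e f : ZFSet} (h : ∀ a b, ZFSet.pair a b ∈ e → fvalZ f a ∈ fvalZ f b) :
    acyclicZ e := by
  intro a ha
  have htg : Relation.TransGen (· ∈ ·) (fvalZ f a) (fvalZ f a) :=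
    Relation.TransGen.lift (r := fun x y => ZFSet.pair x y ∈ e) (p := (· ∈ ·)) (fvalZ f) h a a ha
  exact wf_not_self ZFSet.mem_wf.transGen _ htg

lemma f_empty_of_dom_empty {f : ZFSet} (hfun : isFuncZ f) (h : domZ f = (∅ : Set ZFSet)) :
    f = ∅ := by
  rw [ZFSet.eq_empty]
  intro y hy
  obtain ⟨a, b, rfl⟩ := hfun.1 y hy
  have : a ∈ domZ f := ⟨b, hy⟩
  rw [h] at this
  exact this

section Ext

variable {M : ZFSet}

/-- Extending a total condition by one new vertex `n ↦ x`. -/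
lemma total_ext (hM : IsCTM M) {d e f : ZFSet} (hc : FCond M d e f) (ht : domZ f = d.toSet)
    {n x : ZFSet} (hn : n ∈ ZFSet.omega) (hnd : n ∉ d) (hx : x ∈ M) (hxr : x ∉ ranZ f) :
    ∃ e' f', FCond M (insert n d) e' f' ∧ domZ f' = (insert n d).toSet ∧
      ZFSet.pair n x ∈ f' ∧ (∀ z ∈ f, z ∈ f') ∧
      FriedmanLe (tripleZ (insert n d) e' f') (tripleZ d e f) := by
  classical
  set A := ZFSet.image (fun i => ZFSet.pair i n) (ZFSet.sep (fun i => fvalZ f i ∈ x) d) with hA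
  set B := ZFSet.image (fun i => ZFSet.pair n i) (ZFSet.sep (fun i => x ∈ fvalZ f i) d) with hB
  set e' := e ∪ (A ∪ B) with he'
  set f' := insert (ZFSet.pair n x) f with hf'
  have hdomf : ∀ i ∈ d, ∃ b, ZFSet.pair i b ∈ f := by
    intro i hi
    have : i ∈ domZ f := by rw [ht]; exact hi
    exact this
  have hmem_e' : ∀ z, z ∈ e' ↔ z ∈ e ∨
      (∃ i ∈ d, fvalZ f i ∈ x ∧ z = ZFSet.pair i n) ∨
      (∃ i ∈ d, x ∈ fvalZ f i ∧ z = ZFSet.pair n i) := by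
    intro z
    rw [he', ZFSet.mem_union, ZFSet.mem_union, hA, hB]
    apply or_congr Iff.rfl
    apply or_congr
    · rw [ZFSet.mem_image]
      constructor
      · rintro ⟨i, hi, rfl⟩
        rw [ZFSet.mem_sep] at hi
        exact ⟨i, hi.1, hi.2, rfl⟩
      · rintro ⟨i, hi, h1, rfl⟩
        exact ⟨i, ZFSet.mem_sep.2 ⟨hi, h1⟩, rfl⟩
    · rw [ZFSet.mem_image]
      constructor
      · rintro ⟨i, hi, rfl⟩
        rw [ZFSet.mem_sep] at hi
        exact ⟨i, hi.1, hi.2, rfl⟩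
      · rintro ⟨i, hi, h1, rfl⟩
        exact ⟨i, ZFSet.mem_sep.2 ⟨hi, h1⟩, rfl⟩
  have hmem_f' : ∀ z, z ∈ f' ↔ z = ZFSet.pair n x ∨ z ∈ f := fun z => ZFSet.mem_insert_iff
  -- old membership facts
  have hnd' : ∀ {b : ZFSet}, ZFSet.pair n b ∉ f := by
    intro b hb
    have : n ∈ domZ f := ⟨b, hb⟩
    rw [ht] at this
    exact hnd this
  have hxr' : ∀ {a : ZFSet}, ZFSet.pair a x ∉ f := by
    intro a ha
    exact hxr ⟨a, ha⟩
  have hffun : isFuncZ f' := by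
    constructor
    · intro z hz
      rcases (hmem_f' z).1 hz with rfl | hz'
      · exact ⟨n, x, rfl⟩
      · exact hc.f_fun.1 z hz'
    · intro a b b' hb hb'
      rcases (hmem_f' _).1 hb with h1 | h1 <;> rcases (hmem_f' _).1 hb' with h2 | h2
      · obtain ⟨-, rfl⟩ := ZFSet.pair_injective h1
        obtain ⟨-, rfl⟩ := ZFSet.pair_injective h2
        rfl
      · obtain ⟨rfl, rfl⟩ := ZFSet.pair_injective h1
        exact absurd h2 hnd'
      · obtain ⟨rfl, rfl⟩ := ZFSet.pair_injective h2
        exact absurd h1 hnd'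
      · exact hc.f_fun.2 a b b' h1 h2
  have hval_old : ∀ i ∈ d, fvalZ f' i = fvalZ f i := by
    intro i hi
    obtain ⟨b, hb⟩ := hdomf i hi
    rw [fvalZ_eq hffun ((hmem_f' _).2 (Or.inr hb)), fvalZ_eq hc.f_fun hb]
  have hval_n : fvalZ f' n = x := fvalZ_eq hffun ((hmem_f' _).2 (Or.inl rfl))
  have hne_n : ∀ i ∈ d, i ≠ n := fun i hi hin => hnd (hin ▸ hi)
  -- conditionhood
  have hcond : FCond M (insert n d) e' f' := by
    constructor
    · intro m hm
      rcases ZFSet.mem_insert_iff.1 hm with rfl | hm'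
      · exact hn
      · exact hc.d_sub m hm'
    · rw [ZFSet.toSet_insert]; exact hc.d_fin.insert n
    · intro z hz
      rcases (hmem_e' z).1 hz with hz' | ⟨i, hi, _, rfl⟩ | ⟨i, hi, _, rfl⟩
      · obtain ⟨a, ha, b, hb, rfl⟩ := hc.e_sub z hz'
        exact ⟨a, ZFSet.mem_insert_of_mem _ ha, b, ZFSet.mem_insert_of_mem _ hb, rfl⟩
      · exact ⟨i, ZFSet.mem_insert_of_mem _ hi, n, ZFSet.mem_insert _ _, rfl⟩
      · exact ⟨n, ZFSet.mem_insert _ _, i, ZFSet.mem_insert_of_mem _ hi, rfl⟩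
    · refine acyclic_of_val (f := f') ?_
      intro a b hab
      rcases (hmem_e' _).1 hab with h1 | ⟨i, hi, h1, h2⟩ | ⟨i, hi, h1, h2⟩
      · obtain ⟨ha, hb⟩ := edge_mem_left hc.e_sub h1
        obtain ⟨va, hva⟩ := hdomf a ha
        obtain ⟨vb, hvb⟩ := hdomf b hb
        have := (hc.f_compat ht a ha b hb va vb hva hvb).1 h1
        rw [hval_old a ha, hval_old b hb, fvalZ_eq hc.f_fun hva, fvalZ_eq hc.f_fun hvb]
        exact this
      · obtain ⟨rfl, rfl⟩ := ZFSet.pair_injective h2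
        rw [hval_old a hi, hval_n]
        exact h1
      · obtain ⟨rfl, rfl⟩ := ZFSet.pair_injective h2
        rw [hval_old b hi, hval_n]
        exact h1
    · exact hffun
    · intro a a' b hb hb'
      rcases (hmem_f' _).1 hb with h1 | h1 <;> rcases (hmem_f' _).1 hb' with h2 | h2
      · obtain ⟨rfl, -⟩ := ZFSet.pair_injective h1
        obtain ⟨rfl, -⟩ := ZFSet.pair_injective h2
        rfl
      · obtain ⟨rfl, rfl⟩ := ZFSet.pair_injective h1
        exact absurd h2 hxr'
      · obtain ⟨rfl, rfl⟩ := ZFSet.pair_injective h2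
        exact absurd h1 hxr'
      · exact hc.f_inj a a' b h1 h2
    · right
      ext a
      simp only [domZ, Set.mem_setOf_eq, ZFSet.mem_toSet, ZFSet.mem_insert_iff]
      constructor
      · rintro ⟨b, hb⟩
        rcases (hmem_f' _).1 hb with h1 | h1
        · exact Or.inl (ZFSet.pair_injective h1).1
        · right
          have : a ∈ domZ f := ⟨b, h1⟩
          rwa [ht, ZFSet.mem_toSet] at this
      · rintro (rfl | ha)
        · exact ⟨x, (hmem_f' _).2 (Or.inl rfl)⟩
        · obtain ⟨b, hb⟩ := hdomf a ha
          exact ⟨b, (hmem_f' _).2 (Or.inr hb)⟩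
    · rintro b ⟨a, hab⟩
      rcases (hmem_f' _).1 hab with h1 | h1
      · rw [(ZFSet.pair_injective h1).2]
        exact hx
      · exact hc.f_ran b ⟨a, h1⟩
    · intro _ i hi j hj a b ha hb
      rcases ZFSet.mem_insert_iff.1 hi with hi' | hid <;>
        rcases ZFSet.mem_insert_iff.1 hj with hj' | hjd
      · -- i = j = n
        subst hi'; subst hj'
        have ha' : a = x := by
          rcases (hmem_f' _).1 ha with h1 | h1
          · exact (ZFSet.pair_injective h1).2
          · exact absurd h1 hnd'
        have hb' : b = x := by
          rcases (hmem_f' _).1 hb with h1 | h1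
          · exact (ZFSet.pair_injective h1).2
          · exact absurd h1 hnd'
        rw [ha', hb']
        constructor
        · intro hmem
          exfalso
          rcases (hmem_e' _).1 hmem with h1 | ⟨k, hk, _, h2⟩ | ⟨k, hk, _, h2⟩
          · exact hnd (edge_mem_left hc.e_sub h1).1
          · exact hne_n k hk (ZFSet.pair_injective h2).1.symm
          · exact hne_n k hk (ZFSet.pair_injective h2).2.symm
        · intro hmem
          exact absurd hmem (ZFSet.mem_irrefl x)
      · -- i = n, j ∈ d
        subst hi'
        have ha' : a = x := by
          rcases (hmem_f' _).1 ha with h1 | h1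
          · exact (ZFSet.pair_injective h1).2
          · exact absurd h1 hnd'
        have hbf : ZFSet.pair j b ∈ f := by
          rcases (hmem_f' _).1 hb with h1 | h1
          · exact absurd (ZFSet.pair_injective h1).1 (hne_n j hjd)
          · exact h1
        have hbv : fvalZ f j = b := fvalZ_eq hc.f_fun hbf
        rw [ha']
        constructor
        · intro hmem
          rcases (hmem_e' _).1 hmem with h1 | ⟨k, hk, h2, h3⟩ | ⟨k, hk, h2, h3⟩
          · exact absurd (edge_mem_left hc.e_sub h1).1 hnd
          · exact absurd (ZFSet.pair_injective h3).2 (hne_n j hjd)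
          · obtain ⟨-, hkj⟩ := ZFSet.pair_injective h3
            rw [← hkj, hbv] at h2
            exact h2
        · intro hmem
          refine (hmem_e' _).2 (Or.inr (Or.inr ⟨j, hjd, ?_, rfl⟩))
          rwa [hbv]
      · -- i ∈ d, j = n
        subst hj'
        have hb' : b = x := by
          rcases (hmem_f' _).1 hb with h1 | h1
          · exact (ZFSet.pair_injective h1).2
          · exact absurd h1 hnd'
        have haf : ZFSet.pair i a ∈ f := by
          rcases (hmem_f' _).1 ha with h1 | h1
          · exact absurd (ZFSet.pair_injective h1).1 (hne_n i hid)
          · exact h1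
        have hav : fvalZ f i = a := fvalZ_eq hc.f_fun haf
        rw [hb']
        constructor
        · intro hmem
          rcases (hmem_e' _).1 hmem with h1 | ⟨k, hk, h2, h3⟩ | ⟨k, hk, h2, h3⟩
          · exact absurd (edge_mem_left hc.e_sub h1).2 hnd
          · obtain ⟨hki, -⟩ := ZFSet.pair_injective h3
            rw [← hki, hav] at h2
            exact h2
          · exact absurd (ZFSet.pair_injective h3).1 (hne_n i hid)
        · intro hmem
          refine (hmem_e' _).2 (Or.inr (Or.inl ⟨i, hid, ?_, rfl⟩))
          rwa [hav]
      · -- i, j ∈ d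
        have haf : ZFSet.pair i a ∈ f := by
          rcases (hmem_f' _).1 ha with h1 | h1
          · exact absurd (ZFSet.pair_injective h1).1 (hne_n i hid)
          · exact h1
        have hbf : ZFSet.pair j b ∈ f := by
          rcases (hmem_f' _).1 hb with h1 | h1
          · exact absurd (ZFSet.pair_injective h1).1 (hne_n j hjd)
          · exact h1
        have heq : ZFSet.pair i j ∈ e' ↔ ZFSet.pair i j ∈ e := by
          constructor
          · intro hmem
            rcases (hmem_e' _).1 hmem with h1 | ⟨k, hk, h2, h3⟩ | ⟨k, hk, h2, h3⟩
            · exact h1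
            · exact absurd (ZFSet.pair_injective h3).2 (hne_n j hjd)
            · exact absurd (ZFSet.pair_injective h3).1 (hne_n i hid)
          · intro hmem
            exact (hmem_e' _).2 (Or.inl hmem)
        rw [heq]
        exact hc.f_compat ht i hid j hjd a b haf hbf
  refine ⟨e', f', hcond, ?_, (hmem_f' _).2 (Or.inl rfl), fun z hz => (hmem_f' z).2 (Or.inr hz), ?_⟩
  · rcases hcond.f_dom with h | h
    · exfalso
      have : n ∈ domZ f' := ⟨x, (hmem_f' _).2 (Or.inl rfl)⟩
      rw [h] at this
      exact this
    · exact h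
  · refine ⟨insert n d, e', f', d, e, f, rfl, rfl, fun m hm => ZFSet.mem_insert_of_mem _ hm, ?_,
      fun z hz => (hmem_f' z).2 (Or.inr hz)⟩
    intro z
    constructor
    · intro hz
      exact ⟨(hmem_e' z).2 (Or.inl hz), hc.e_sub z hz⟩
    · rintro ⟨hz, a, ha, b, hb, rfl⟩
      rcases (hmem_e' _).1 hz with h1 | ⟨k, hk, h2, h3⟩ | ⟨k, hk, h2, h3⟩
      · exact h1
      · exact absurd (ZFSet.pair_injective h3).2 (hne_n b hb)
      · exact absurd (ZFSet.pair_injective h3).1 (hne_n a ha)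

end Ext
/-! ### Section 7: density of total conditions hitting `n` and `x` -/

attribute [local instance] Classical.allZFSetDefinable

lemma friedmanLe_refl {M p : ZFSet} (hp : p ∈ FriedmanP M) : FriedmanLe p p := by
  obtain ⟨d, e, f, hc, rfl⟩ := hp
  refine ⟨d, e, f, d, e, f, rfl, rfl, fun m hm => hm, ?_, fun z hz => hz⟩
  intro z
  exact ⟨fun hz => ⟨hz, hc.e_sub z hz⟩, fun hz => hz.1⟩

lemma friedmanLe_trans {p q r : ZFSet} (hpq : FriedmanLe p q) (hqr : FriedmanLe q r) :
    FriedmanLe p r := by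
  obtain ⟨dp, ep, fp, dq, eq1, fq, rfl, rfl, hd1, he1, hf1⟩ := hpq
  obtain ⟨dq', eq', fq', dr, er, fr, hq, rfl, hd2, he2, hf2⟩ := hqr
  obtain ⟨rfl, rfl, rfl⟩ := tripleZ_injective hq
  refine ⟨dp, ep, fp, dr, er, fr, rfl, rfl, fun m hm => hd1 m (hd2 m hm), ?_,
    fun z hz => hf1 z (hf2 z hz)⟩
  intro z
  rw [he2 z, he1 z]
  constructor
  · rintro ⟨⟨hz, -⟩, hb⟩
    exact ⟨hz, hb⟩
  · rintro ⟨hz, a, ha, b, hb, rfl⟩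
    exact ⟨⟨hz, a, hd2 a ha, b, hd2 b hb, rfl⟩, a, ha, b, hb, rfl⟩

lemma realize_total {M : ZFSet} (hM : IsCTM M) {d e f : ZFSet} (hc : FCond M d e f) :
    ∃ f1, FCond M d e f1 ∧ domZ f1 = d.toSet ∧
      FriedmanLe (tripleZ d e f1) (tripleZ d e f) := by
  rcases hc.f_dom with hdom | hdom
  · -- f is empty; realize from scratch
    have hf : f = ∅ := f_empty_of_dom_empty hc.f_fun hdom
    subst hf
    have hwf := acyclic_wf hc.e_sub hc.d_fin hc.e_acyc
    set g := realizeF (d := d) hwf with hg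
    set f1 := ZFSet.image (fun i => ZFSet.pair i (g i)) d with hf1
    have hmemf1 : ∀ z, z ∈ f1 ↔ ∃ i ∈ d, z = ZFSet.pair i (g i) := by
      intro z
      rw [hf1, ZFSet.mem_image]
      constructor
      · rintro ⟨i, hi, rfl⟩; exact ⟨i, hi, rfl⟩
      · rintro ⟨i, hi, rfl⟩; exact ⟨i, hi, rfl⟩
    have hdM : ∀ j ∈ d, j ∈ M := fun j hj => omega_subM hM (hc.d_sub j hj)
    have hcond : FCond M d e f1 := by
      refine ⟨hc.d_sub, hc.d_fin, hc.e_sub, hc.e_acyc, ?_, ?_, ?_, ?_, ?_⟩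
      · constructor
        · intro z hz
          obtain ⟨i, hi, rfl⟩ := (hmemf1 z).1 hz
          exact ⟨i, g i, rfl⟩
        · intro a b b' hb hb'
          obtain ⟨i, hi, h1⟩ := (hmemf1 _).1 hb
          obtain ⟨j, hj, h2⟩ := (hmemf1 _).1 hb'
          obtain ⟨rfl, rfl⟩ := ZFSet.pair_injective h1
          obtain ⟨rfl, rfl⟩ := ZFSet.pair_injective h2
          rfl
      · intro a a' b hb hb'
        obtain ⟨i, hi, h1⟩ := (hmemf1 _).1 hb
        obtain ⟨j, hj, h2⟩ := (hmemf1 _).1 hb'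
        obtain ⟨rfl, rfl⟩ := ZFSet.pair_injective h1
        obtain ⟨rfl, hgij⟩ := ZFSet.pair_injective h2
        exact (realizeF_injective hwf hgij.symm).symm
      · right
        ext a
        simp only [domZ, Set.mem_setOf_eq, ZFSet.mem_toSet]
        constructor
        · rintro ⟨b, hb⟩
          obtain ⟨i, hi, h1⟩ := (hmemf1 _).1 hb
          rw [(ZFSet.pair_injective h1).1]
          exact hi
        · intro ha
          exact ⟨g a, (hmemf1 _).2 ⟨a, ha, rfl⟩⟩
      · rintro b ⟨a, hab⟩
        obtain ⟨i, hi, h1⟩ := (hmemf1 _).1 hab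
        rw [(ZFSet.pair_injective h1).2]
        exact realizeF_memM hwf hM hc.d_fin hdM i (hdM i hi)
      · intro _ i hi j hj a b ha hb
        obtain ⟨i', hi', h1⟩ := (hmemf1 _).1 ha
        obtain ⟨j', hj', h2⟩ := (hmemf1 _).1 hb
        obtain ⟨rfl, rfl⟩ := ZFSet.pair_injective h1
        obtain ⟨rfl, rfl⟩ := ZFSet.pair_injective h2
        rw [realizeF_mem_iff hwf]
        exact ⟨fun h => ⟨h, hi⟩, fun h => h.1⟩
    refine ⟨f1, hcond, ?_, ?_⟩
    · rcases hcond.f_dom with h | h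
      · by_cases hd : d = ∅
        · subst hd
          rw [h, ZFSet.toSet_empty]
        · exfalso
          obtain ⟨i, hi⟩ := (ZFSet.eq_empty_or_nonempty d).resolve_left hd
          have : i ∈ domZ f1 := ⟨g i, (hmemf1 _).2 ⟨i, hi, rfl⟩⟩
          rw [h] at this
          exact this
      · exact h
    · refine ⟨d, e, f1, d, e, ∅, rfl, rfl, fun m hm => hm, ?_, fun z hz => absurd hz (ZFSet.notMem_empty z)⟩
      intro z
      exact ⟨fun hz => ⟨hz, hc.e_sub z hz⟩, fun hz => hz.1⟩
  · exact ⟨f, hc, hdom, friedmanLe_refl ⟨d, e, f, hc, rfl⟩⟩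

lemma exists_fresh_nat {d : ZFSet} (hfin : d.toSet.Finite) :
    ∃ n, n ∈ ZFSet.omega ∧ n ∉ d := by
  have hS : {m : ℕ | natZ m ∈ d}.Finite :=
    Set.Finite.preimage (Set.injOn_of_injective natZ_inj) hfin
  obtain ⟨m, hm⟩ := hS.infinite_compl.nonempty
  exact ⟨natZ m, natZ_mem_omega m, hm⟩

lemma M_infinite {M : ZFSet} (hM : IsCTM M) : M.toSet.Infinite :=
  Set.infinite_of_injective_forall_mem natZ_inj fun n => (ZFSet.mem_toSet _ _).2 (natZ_memM hM n)

lemma exists_fresh_val {M f : ZFSet} (hM : IsCTM M) (hfun : isFuncZ f)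
    (hfin : f.toSet.Finite) : ∃ y, y ∈ M ∧ y ∉ ranZ f := by
  obtain ⟨y, hy1, hy2⟩ := ((M_infinite hM).diff (ranZ_finite hfun hfin)).nonempty
  exact ⟨y, hy1, hy2⟩

/-- The key density property: below any condition there is a total condition
with `n` in its domain and `x` in its range. -/
lemma density_Dnx {M : ZFSet} (hM : IsCTM M) {n x : ZFSet} (hn : n ∈ ZFSet.omega)
    (hx : x ∈ M) :
    ∀ p ∈ FriedmanP M, ∃ d' e' f', FCond M d' e' f' ∧ domZ f' = d'.toSet ∧
      n ∈ d' ∧ (∃ a, ZFSet.pair a x ∈ f') ∧ FriedmanLe (tripleZ d' e' f') p := by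
  rintro p ⟨d, e, f, hc, rfl⟩
  obtain ⟨f1, hc1, hdom1, hle1⟩ := realize_total hM hc
  by_cases hxr : x ∈ ranZ f1
  · by_cases hnd : n ∈ d
    · exact ⟨d, e, f1, hc1, hdom1, hnd, hxr, hle1⟩
    · obtain ⟨y, hyM, hyr⟩ := exists_fresh_val hM hc1.f_fun hc1.f_fin
      obtain ⟨e', f', hc', hdom', hnf', hsub', hle'⟩ :=
        total_ext hM hc1 hdom1 hn hnd hyM hyr
      obtain ⟨a, ha⟩ := hxr
      exact ⟨insert n d, e', f', hc', hdom', ZFSet.mem_insert _ _, ⟨a, hsub' _ ha⟩,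
        friedmanLe_trans hle' hle1⟩
  · by_cases hnd : n ∈ d
    · obtain ⟨k, hk, hkd⟩ := exists_fresh_nat hc1.d_fin
      obtain ⟨e', f', hc', hdom', hkf', hsub', hle'⟩ :=
        total_ext hM hc1 hdom1 hk hkd hx hxr
      exact ⟨insert k d, e', f', hc', hdom', ZFSet.mem_insert_of_mem _ hnd, ⟨k, hkf'⟩,
        friedmanLe_trans hle' hle1⟩
    · obtain ⟨e', f', hc', hdom', hnf', hsub', hle'⟩ :=
        total_ext hM hc1 hdom1 hn hnd hx hxr
      exact ⟨insert n d, e', f', hc', hdom', ZFSet.mem_insert _ _, ⟨n, hnf'⟩,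
        friedmanLe_trans hle' hle1⟩
/-! ### Section 8: definable clauses -/

namespace IsDef

variable {M : ZFSet} {n : ℕ}

lemma ballSet (hM : IsCTM M) {P : (Fin (n+1) → ZFSet) → Prop} (k : Fin n)
    (h : IsDef M P) : IsDef M fun v => ∀ z ∈ v k, P (Fin.snoc v z) := by
  have h1 : IsDef M fun v : Fin (n+1) → ZFSet =>
      v (Fin.last n) ∈ v k.castSucc → P v := (IsDef.mem _ _).imp h
  refine h1.allM.congr fun v hv => ?_
  simp only [Fin.snoc_last, Fin.snoc_castSucc]
  constructor
  · intro hall z hz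
    exact hall z (memM_of_mem hM (hv k) hz) hz
  · intro hall z _ hz
    exact hall z hz

lemma bexSet (hM : IsCTM M) {P : (Fin (n+1) → ZFSet) → Prop} (k : Fin n)
    (h : IsDef M P) : IsDef M fun v => ∃ z ∈ v k, P (Fin.snoc v z) := by
  have h1 : IsDef M fun v : Fin (n+1) → ZFSet =>
      v (Fin.last n) ∈ v k.castSucc ∧ P v := (IsDef.mem _ _).and h
  refine h1.exM.congr fun v hv => ?_
  simp only [Fin.snoc_last, Fin.snoc_castSucc]
  constructor
  · rintro ⟨z, _, hz, hP⟩
    exact ⟨z, hz, hP⟩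
  · rintro ⟨z, hz, hP⟩
    exact ⟨z, memM_of_mem hM (hv k) hz, hz, hP⟩

end IsDef

section Clauses

variable {M : ZFSet} {n : ℕ}

lemma isDef_ballMem (hM : IsCTM M) (kd kw : Fin n) :
    IsDef M fun v => ∀ u ∈ v kd, u ∈ v kw := by
  refine (IsDef.ballSet hM kd (IsDef.mem (Fin.last n) kw.castSucc)).congr fun v hv => ?_
  simp only [Fin.snoc_last, Fin.snoc_castSucc]

lemma isDef_bounded (hM : IsCTM M) (kd kw : Fin n) :
    IsDef M fun v => ∃ k ∈ v kw, ∀ u ∈ v kd, u ∈ k := by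
  have core : IsDef M fun v : Fin (n+2) → ZFSet =>
      v (Fin.last (n+1)) ∈ v (Fin.last n).castSucc := IsDef.mem _ _
  exact (IsDef.bexSet hM kw ((IsDef.ballSet hM kd.castSucc core))).congr fun v hv => by
    simp only [Fin.snoc_last, Fin.snoc_castSucc]

lemma isDef_eSub (hM : IsCTM M) (ke kd : Fin n) :
    IsDef M fun v => ∀ z ∈ v ke, ∃ a ∈ v kd, ∃ b ∈ v kd, z = ZFSet.pair a b := by
  have core : IsDef M fun v : Fin (n+3) → ZFSet =>
      v (Fin.last n).castSucc.castSucc = ZFSet.pair (v (Fin.last (n+1)).castSucc) (v (Fin.last (n+2))) :=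
    isDef_eqPair hM _ _ _
  exact (IsDef.ballSet hM ke
      (IsDef.bexSet hM kd.castSucc
        (IsDef.bexSet hM kd.castSucc.castSucc core))).congr fun v hv => by
    simp only [Fin.snoc_last, Fin.snoc_castSucc]

lemma isDef_acycMin (hM : IsCTM M) (ke kd : Fin n) :
    IsDef M fun v => ∀ s ∈ M, (∃ y ∈ s, y = y) → (∀ y ∈ s, y ∈ v kd) →
      ∃ a ∈ s, ∀ b ∈ s, ZFSet.pair b a ∉ v ke := by
  have hne : IsDef M fun v : Fin (n+2) → ZFSet =>
      v (Fin.last (n+1)) = v (Fin.last (n+1)) := IsDef.eq _ _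
  have hsubd : IsDef M fun v : Fin (n+2) → ZFSet =>
      v (Fin.last (n+1)) ∈ v kd.castSucc.castSucc := IsDef.mem _ _
  have hmin : IsDef M fun v : Fin (n+3) → ZFSet =>
      ¬ ZFSet.pair (v (Fin.last (n+2))) (v (Fin.last (n+1)).castSucc) ∈ v ke.castSucc.castSucc.castSucc :=
    (isDef_memPair hM _ _ _).not
  have hbody : IsDef M fun v : Fin (n+1) → ZFSet =>
      (∃ y ∈ v (Fin.last n), y = y) → (∀ y ∈ v (Fin.last n), y ∈ v kd.castSucc) →
        ∃ a ∈ v (Fin.last n), ∀ b ∈ v (Fin.last n), ZFSet.pair b a ∉ v ke.castSucc := by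
    have h1 := IsDef.bexSet hM (Fin.last n) hne
    have h2 := IsDef.ballSet hM (Fin.last n) hsubd
    have h3 := IsDef.bexSet hM (Fin.last n)
      (IsDef.ballSet hM (Fin.last n).castSucc hmin)
    refine (h1.imp (h2.imp h3)).congr fun v hv => ?_
    simp only [Fin.snoc_last, Fin.snoc_castSucc]
  refine hbody.allM.congr fun v hv => ?_
  simp only [Fin.snoc_last, Fin.snoc_castSucc]

lemma isDef_fShape (hM : IsCTM M) (kf : Fin n) :
    IsDef M fun v => ∀ z ∈ v kf, ∃ a ∈ M, ∃ b ∈ M, z = ZFSet.pair a b := by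
  have core : IsDef M fun v : Fin (n+3) → ZFSet =>
      v (Fin.last n).castSucc.castSucc = ZFSet.pair (v (Fin.last (n+1)).castSucc) (v (Fin.last (n+2))) :=
    isDef_eqPair hM _ _ _
  exact (IsDef.ballSet hM kf (core.exM.exM)).congr fun v hv => by
    simp only [Fin.snoc_last, Fin.snoc_castSucc]

lemma isDef_fFun (hM : IsCTM M) (kf : Fin n) :
    IsDef M fun v => ∀ a ∈ M, ∀ b ∈ M, ∀ b' ∈ M,
      ZFSet.pair a b ∈ v kf → ZFSet.pair a b' ∈ v kf → b = b' := by
  have core : IsDef M fun v : Fin (n+3) → ZFSet =>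
      ZFSet.pair (v (Fin.last n).castSucc.castSucc) (v (Fin.last (n+1)).castSucc) ∈ v kf.castSucc.castSucc.castSucc →
      ZFSet.pair (v (Fin.last n).castSucc.castSucc) (v (Fin.last (n+2))) ∈ v kf.castSucc.castSucc.castSucc →
      v (Fin.last (n+1)).castSucc = v (Fin.last (n+2)) :=
    (isDef_memPair hM _ _ _).imp ((isDef_memPair hM _ _ _).imp (IsDef.eq _ _))
  exact core.allM.allM.allM.congr fun v hv => by
    simp only [Fin.snoc_last, Fin.snoc_castSucc]

lemma isDef_fInj (hM : IsCTM M) (kf : Fin n) :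
    IsDef M fun v => ∀ a ∈ M, ∀ a' ∈ M, ∀ b ∈ M,
      ZFSet.pair a b ∈ v kf → ZFSet.pair a' b ∈ v kf → a = a' := by
  have core : IsDef M fun v : Fin (n+3) → ZFSet =>
      ZFSet.pair (v (Fin.last n).castSucc.castSucc) (v (Fin.last (n+2))) ∈ v kf.castSucc.castSucc.castSucc →
      ZFSet.pair (v (Fin.last (n+1)).castSucc) (v (Fin.last (n+2))) ∈ v kf.castSucc.castSucc.castSucc →
      v (Fin.last n).castSucc.castSucc = v (Fin.last (n+1)).castSucc :=
    (isDef_memPair hM _ _ _).imp ((isDef_memPair hM _ _ _).imp (IsDef.eq _ _))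
  exact core.allM.allM.allM.congr fun v hv => by
    simp only [Fin.snoc_last, Fin.snoc_castSucc]

lemma isDef_fTotal (hM : IsCTM M) (kd kf : Fin n) :
    IsDef M fun v => ∀ a ∈ v kd, ∃ b ∈ M, ZFSet.pair a b ∈ v kf := by
  have core : IsDef M fun v : Fin (n+2) → ZFSet =>
      ZFSet.pair (v (Fin.last n).castSucc) (v (Fin.last (n+1))) ∈ v kf.castSucc.castSucc :=
    isDef_memPair hM _ _ _
  exact (IsDef.ballSet hM kd core.exM).congr fun v hv => by
    simp only [Fin.snoc_last, Fin.snoc_castSucc]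

lemma isDef_fDomSub (hM : IsCTM M) (kd kf : Fin n) :
    IsDef M fun v => ∀ a ∈ M, ∀ b ∈ M, ZFSet.pair a b ∈ v kf → a ∈ v kd := by
  have core : IsDef M fun v : Fin (n+2) → ZFSet =>
      ZFSet.pair (v (Fin.last n).castSucc) (v (Fin.last (n+1))) ∈ v kf.castSucc.castSucc →
      v (Fin.last n).castSucc ∈ v kd.castSucc.castSucc :=
    (isDef_memPair hM _ _ _).imp (IsDef.mem _ _)
  exact core.allM.allM.congr fun v hv => by
    simp only [Fin.snoc_last, Fin.snoc_castSucc]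

lemma isDef_fCompat (hM : IsCTM M) (kd ke kf : Fin n) :
    IsDef M fun v => ∀ i ∈ v kd, ∀ j ∈ v kd, ∀ a ∈ M, ∀ b ∈ M,
      ZFSet.pair i a ∈ v kf → ZFSet.pair j b ∈ v kf →
        (ZFSet.pair i j ∈ v ke ↔ a ∈ b) := by
  have core : IsDef M fun v : Fin (n+4) → ZFSet =>
      ZFSet.pair (v (Fin.last n).castSucc.castSucc.castSucc) (v (Fin.last (n+2)).castSucc) ∈ v kf.castSucc.castSucc.castSucc.castSucc →
      ZFSet.pair (v (Fin.last (n+1)).castSucc.castSucc) (v (Fin.last (n+3))) ∈ v kf.castSucc.castSucc.castSucc.castSucc →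
      (ZFSet.pair (v (Fin.last n).castSucc.castSucc.castSucc) (v (Fin.last (n+1)).castSucc.castSucc) ∈ v ke.castSucc.castSucc.castSucc.castSucc ↔
        v (Fin.last (n+2)).castSucc ∈ v (Fin.last (n+3))) :=
    (isDef_memPair hM _ _ _).imp ((isDef_memPair hM _ _ _).imp
      ((isDef_memPair hM _ _ _).iff (IsDef.mem _ _)))
  exact (IsDef.ballSet hM kd (IsDef.ballSet hM kd.castSucc (core.allM.allM))).congr fun v hv => by
    simp only [Fin.snoc_last, Fin.snoc_castSucc]

lemma isDef_xRan (hM : IsCTM M) (kx kf : Fin n) :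
    IsDef M fun v => ∃ a ∈ M, ZFSet.pair a (v kx) ∈ v kf := by
  have core : IsDef M fun v : Fin (n+1) → ZFSet =>
      ZFSet.pair (v (Fin.last n)) (v kx.castSucc) ∈ v kf.castSucc :=
    isDef_memPair hM _ _ _
  exact core.exM.congr fun v hv => by
    simp only [Fin.snoc_last, Fin.snoc_castSucc]

end Clauses
/-! ### Section 9: the dense classes are definable over `M` -/

section DnxDef

variable {M : ZFSet}

lemma pair_args_inM (hM : IsCTM M) {f a b : ZFSet} (hf : f ∈ M)
    (h : ZFSet.pair a b ∈ f) : a ∈ M ∧ b ∈ M := by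
  have hp : ZFSet.pair a b ∈ M := memM_of_mem hM hf h
  have h1 : ({a} : ZFSet) ∈ M := by
    refine memM_of_mem hM hp ?_
    rw [ZFSet.pair, ZFSet.mem_pair]
    exact Or.inl rfl
  have h2 : ({a, b} : ZFSet) ∈ M := by
    refine memM_of_mem hM hp ?_
    rw [ZFSet.pair, ZFSet.mem_pair]
    exact Or.inr rfl
  exact ⟨memM_of_mem hM h1 (ZFSet.mem_singleton.2 rfl),
    memM_of_mem hM h2 (ZFSet.mem_pair.2 (Or.inr rfl))⟩

lemma FCond.dM {d e f : ZFSet} (hM : IsCTM M) (hc : FCond M d e f) : d ∈ M :=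
  finite_memM hM hc.d_fin fun y hy => omega_subM hM (hc.d_sub y hy)

lemma FCond.eM {d e f : ZFSet} (hM : IsCTM M) (hc : FCond M d e f) : e ∈ M := by
  refine finite_memM hM hc.e_fin fun y hy => ?_
  obtain ⟨a, ha, b, hb, rfl⟩ := hc.e_sub y hy
  exact pairZ_memM hM (omega_subM hM (hc.d_sub a ha)) (omega_subM hM (hc.d_sub b hb))

lemma FCond.fM {d e f : ZFSet} (hM : IsCTM M) (hc : FCond M d e f) : f ∈ M := by
  refine finite_memM hM hc.f_fin fun y hy => ?_
  obtain ⟨a, b, rfl⟩ := hc.f_fun.1 y hy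
  have hb : b ∈ M := hc.f_ran b ⟨a, hy⟩
  have ha : a ∈ M := by
    have hadom : a ∈ domZ f := ⟨b, hy⟩
    rcases hc.f_dom with hdom | hdom
    · rw [hdom] at hadom; exact hadom.elim
    · rw [hdom] at hadom
      exact omega_subM hM (hc.d_sub a hadom)
  exact pairZ_memM hM ha hb

/-- The first-order content of membership in the dense class `D_{n,x}`. -/
def InnerSem (M p nn xx ww d e f : ZFSet) : Prop :=
  p = tripleZ d e f ∧
  (∀ u ∈ d, u ∈ ww) ∧
  (∃ k ∈ ww, ∀ u ∈ d, u ∈ k) ∧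
  (∀ z ∈ e, ∃ a ∈ d, ∃ b ∈ d, z = ZFSet.pair a b) ∧
  (∀ s ∈ M, (∃ y ∈ s, y = y) → (∀ y ∈ s, y ∈ d) → ∃ a ∈ s, ∀ b ∈ s, ZFSet.pair b a ∉ e) ∧
  (∀ z ∈ f, ∃ a ∈ M, ∃ b ∈ M, z = ZFSet.pair a b) ∧
  (∀ a ∈ M, ∀ b ∈ M, ∀ b' ∈ M, ZFSet.pair a b ∈ f → ZFSet.pair a b' ∈ f → b = b') ∧
  (∀ a ∈ M, ∀ a' ∈ M, ∀ b ∈ M, ZFSet.pair a b ∈ f → ZFSet.pair a' b ∈ f → a = a') ∧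
  (∀ a ∈ d, ∃ b ∈ M, ZFSet.pair a b ∈ f) ∧
  (∀ a ∈ M, ∀ b ∈ M, ZFSet.pair a b ∈ f → a ∈ d) ∧
  (∀ i ∈ d, ∀ j ∈ d, ∀ a ∈ M, ∀ b ∈ M, ZFSet.pair i a ∈ f → ZFSet.pair j b ∈ f →
    (ZFSet.pair i j ∈ e ↔ a ∈ b)) ∧
  nn ∈ d ∧
  (∃ a ∈ M, ZFSet.pair a xx ∈ f)

/-- The dense-class predicate: `p` codes a total condition with `nn` in its
domain and `xx` in its range. -/
def DnxSem (M p nn xx ww : ZFSet) : Prop :=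
  ∃ d ∈ M, ∃ e ∈ M, ∃ f ∈ M, InnerSem M p nn xx ww d e f

lemma isDef_InnerSem (hM : IsCTM M) :
    IsDef M fun v : Fin 7 → ZFSet => InnerSem M
      (v ((0 : Fin 4).castSucc.castSucc.castSucc))
      (v ((1 : Fin 4).castSucc.castSucc.castSucc))
      (v ((2 : Fin 4).castSucc.castSucc.castSucc))
      (v ((3 : Fin 4).castSucc.castSucc.castSucc))
      (v ((Fin.last 4).castSucc.castSucc))
      (v ((Fin.last 5).castSucc))
      (v (Fin.last 6)) := by
  set ip : Fin 7 := (0 : Fin 4).castSucc.castSucc.castSucc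
  set inn : Fin 7 := (1 : Fin 4).castSucc.castSucc.castSucc
  set ix : Fin 7 := (2 : Fin 4).castSucc.castSucc.castSucc
  set iw : Fin 7 := (3 : Fin 4).castSucc.castSucc.castSucc
  set idd : Fin 7 := (Fin.last 4).castSucc.castSucc
  set ie : Fin 7 := (Fin.last 5).castSucc
  set iff' : Fin 7 := Fin.last 6
  exact (isDef_eqTriple hM idd ie iff' ip).and
    ((isDef_ballMem hM idd iw).and
    ((isDef_bounded hM idd iw).and
    ((isDef_eSub hM ie idd).and
    ((isDef_acycMin hM ie idd).and
    ((isDef_fShape hM iff').and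
    ((isDef_fFun hM iff').and
    ((isDef_fInj hM iff').and
    ((isDef_fTotal hM idd iff').and
    ((isDef_fDomSub hM idd iff').and
    ((isDef_fCompat hM idd ie iff').and
    ((IsDef.mem inn idd).and
    (isDef_xRan hM ix iff'))))))))))))

lemma isDef_DnxSem (hM : IsCTM M) :
    IsDef M fun v : Fin 4 → ZFSet => DnxSem M (v 0) (v 1) (v 2) (v 3) := by
  have h := (isDef_InnerSem hM).exM.exM.exM
  refine h.congr fun v hv => ?_
  simp only [Fin.snoc_last, Fin.snoc_castSucc]
  exact Iff.rfl

lemma DnxSem_iff (hM : IsCTM M) {p n x : ZFSet} (hp : p ∈ M) :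
    DnxSem M p n x ZFSet.omega ↔
      ∃ d e f, FCond M d e f ∧ domZ f = d.toSet ∧ n ∈ d ∧ (∃ a, ZFSet.pair a x ∈ f) ∧
        p = tripleZ d e f := by
  constructor
  · rintro ⟨d, hdM, e, heM, f, hfM, h1, h2, h3, h4, h5, h6, h7, h8, h9, h10, h11, h12, h13⟩
    have hdfin : d.toSet.Finite := (bounded_iff_finite h2).1 h3
    have hdom : domZ f = d.toSet := by
      ext a
      constructor
      · rintro ⟨b, hb⟩
        obtain ⟨haM, hbM⟩ := pair_args_inM hM hfM hb
        exact (ZFSet.mem_toSet _ _).2 (h10 a haM b hbM hb)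
      · intro ha
        rw [ZFSet.mem_toSet] at ha
        obtain ⟨b, _, hb⟩ := h9 a ha
        exact ⟨b, hb⟩
    have hffun : isFuncZ f := by
      constructor
      · intro z hz
        obtain ⟨a, _, b, _, rfl⟩ := h6 z hz
        exact ⟨a, b, rfl⟩
      · intro a b b' hb hb'
        obtain ⟨haM, hbM⟩ := pair_args_inM hM hfM hb
        exact h7 a haM b hbM b' (pair_args_inM hM hfM hb').2 hb hb'
    have hc : FCond M d e f := by
      refine ⟨h2, hdfin, h4, ?_, hffun, ?_, Or.inr hdom, ?_, ?_⟩
      · -- acyclicity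
        rw [acyclicZ_iff_min h4 hdfin]
        intro s hs hsne
        have hsM : s ∈ M := by
          refine finite_memM hM (hdfin.subset fun y hy => hs y hy) ?_
          intro y hy
          exact omega_subM hM (h2 y (hs y hy))
        obtain ⟨y, hy⟩ := (ZFSet.eq_empty_or_nonempty s).resolve_left hsne
        exact h5 s hsM ⟨y, hy, rfl⟩ hs
      · intro a a' b ha ha'
        exact h8 a (pair_args_inM hM hfM ha).1 a' (pair_args_inM hM hfM ha').1 b
          (pair_args_inM hM hfM ha).2 ha ha'
      · rintro b ⟨a, hab⟩
        exact (pair_args_inM hM hfM hab).2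
      · intro _ i hi j hj a b ha hb
        exact h11 i hi j hj a (pair_args_inM hM hfM ha).2 b (pair_args_inM hM hfM hb).2 ha hb
    obtain ⟨a, _, ha⟩ := h13
    exact ⟨d, e, f, hc, hdom, h12, ⟨a, ha⟩, h1⟩
  · rintro ⟨d, e, f, hc, hdom, hnd, ⟨a, ha⟩, rfl⟩
    have hfM := hc.fM hM
    refine ⟨d, hc.dM hM, e, hc.eM hM, f, hfM, rfl, hc.d_sub, ?_, hc.e_sub, ?_, ?_, ?_, ?_,
      ?_, ?_, ?_, hnd, ?_⟩
    · exact (bounded_iff_finite hc.d_sub).2 hc.d_fin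
    · intro s hsM hsne hsd
      obtain ⟨y, hy, -⟩ := hsne
      have hsne' : s ≠ ∅ := fun h => ZFSet.notMem_empty y (h ▸ hy)
      exact (acyclicZ_iff_min hc.e_sub hc.d_fin).1 hc.e_acyc s hsd hsne'
    · intro z hz
      obtain ⟨a', b', rfl⟩ := hc.f_fun.1 z hz
      obtain ⟨h1, h2⟩ := pair_args_inM hM hfM hz
      exact ⟨a', h1, b', h2, rfl⟩
    · intro a' _ b _ b' _ h1 h2
      exact hc.f_fun.2 a' b b' h1 h2
    · intro a' _ a'' _ b _ h1 h2
      exact hc.f_inj a' a'' b h1 h2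
    · intro a' ha'
      have : a' ∈ domZ f := by rw [hdom]; exact ha'
      obtain ⟨b, hb⟩ := this
      exact ⟨b, (pair_args_inM hM hfM hb).2, hb⟩
    · intro a' _ b _ h1
      have : a' ∈ domZ f := ⟨b, h1⟩
      rwa [hdom, ZFSet.mem_toSet] at this
    · intro i hi j hj a' _ b _ h1 h2
      exact hc.f_compat hdom i hi j hj a' b h1 h2
    · exact ⟨a, (pair_args_inM hM hfM ha).1, ha⟩

/-- The dense class `D_{n,x}` as a class. -/
def Dnx (M n x : ZFSet) : Set ZFSet := {p | DnxSem M p n x ZFSet.omega}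

lemma Dnx_subM (hM : IsCTM M) {n x : ZFSet} : Dnx M n x ⊆ M.toSet := by
  rintro p ⟨d, hdM, e, heM, f, hfM, h1, -⟩
  rw [ZFSet.mem_toSet, h1]
  exact pairZ_memM hM hdM (pairZ_memM hM heM hfM)

lemma Dnx_sub_FriedmanP (hM : IsCTM M) {n x : ZFSet} : Dnx M n x ⊆ FriedmanP M := by
  intro p hp
  have hpM : p ∈ M := (ZFSet.mem_toSet _ _).1 (Dnx_subM hM hp)
  obtain ⟨d, e, f, hc, -, -, -, rfl⟩ := (DnxSem_iff hM hpM).1 hp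
  exact ⟨d, e, f, hc, rfl⟩

lemma append_fin_one_mem {v : Fin 1 → ZFSet} {a : Fin 3 → ZFSet}
    (hv : ∀ i, v i ∈ M) (ha : ∀ i, a i ∈ M) : ∀ i, Fin.append v a i ∈ M := by
  intro i
  refine Fin.addCases (fun j => ?_) (fun j => ?_) i
  · rw [Fin.append_left]; exact hv j
  · rw [Fin.append_right]; exact ha j

lemma Dnx_mem_DefClasses (hM : IsCTM M) {n x : ZFSet} (hn : n ∈ M) (hx : x ∈ M) :
    Dnx M n x ∈ DefClasses M := by
  refine ⟨Dnx_subM hM, ?_⟩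
  obtain ⟨φ, hφ⟩ := isDef_DnxSem (M := M) hM
  refine ⟨3, φ, ![n, x, ZFSet.omega], ?_, ?_⟩
  · intro i
    fin_cases i
    · exact hn
    · exact hx
    · exact hM.infinity
  · intro v hv
    have hall : ∀ i, Fin.append v ![n, x, ZFSet.omega] i ∈ M := by
      refine append_fin_one_mem hv ?_
      intro i
      fin_cases i
      · exact hn
      · exact hx
      · exact hM.infinity
    have := hφ (Fin.append v ![n, x, ZFSet.omega]) hall
    exact this

lemma Dnx_dense (hM : IsCTM M) {n x : ZFSet} (hn : n ∈ ZFSet.omega) (hx : x ∈ M) :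
    DenseIn (FriedmanP M) FriedmanLe (Dnx M n x) := by
  intro p hp
  obtain ⟨d', e', f', hc', hdom', hnd', hran', hle'⟩ := density_Dnx hM hn hx p hp
  have hq : tripleZ d' e' f' ∈ FriedmanP M := ⟨d', e', f', hc', rfl⟩
  refine ⟨tripleZ d' e' f', ?_, hq, hle'⟩
  rw [Dnx, Set.mem_setOf_eq, DnxSem_iff hM (friedmanP_subM hM hq)]
  exact ⟨d', e', f', hc', hdom', hnd', hran', rfl⟩

end DnxDef
/-! ### Section 10: the generic function `h` -/

section Generic

variable {M : ZFSet} (hM : IsCTM M) {G : Set ZFSet}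
  (hG : IsGenericRaw M (DefClasses M) (FriedmanP M) FriedmanLe G)

include hM hG

lemma G_meets_Dnx {n x : ZFSet} (hn : n ∈ ZFSet.omega) (hx : x ∈ M) :
    ∃ q ∈ G, q ∈ Dnx M n x := by
  obtain ⟨q, hq1, hq2⟩ := hG.meets (Dnx M n x)
    (Dnx_mem_DefClasses hM (omega_subM hM hn) hx) (Dnx_sub_FriedmanP hM)
    (Dnx_dense hM hn hx)
  exact ⟨q, hq2, hq1⟩

omit hM hG

/-- The union of the graph parts of conditions in the filter. -/
def Hrel (M : ZFSet) (G : Set ZFSet) (n y : ZFSet) : Prop :=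
  ∃ d e f, FCond M d e f ∧ tripleZ d e f ∈ G ∧ ZFSet.pair n y ∈ f

include hG in
lemma G_common {p q : ZFSet} (hp : p ∈ G) (hq : q ∈ G) :
    ∃ dr er fr, FCond M dr er fr ∧ tripleZ dr er fr ∈ G ∧
      FriedmanLe (tripleZ dr er fr) p ∧ FriedmanLe (tripleZ dr er fr) q := by
  obtain ⟨r, hr, hrp, hrq⟩ := hG.compat p hp q hq
  obtain ⟨dr, er, fr, hcr, rfl⟩ := hG.sub hr
  exact ⟨dr, er, fr, hcr, hr, hrp, hrq⟩

lemma le_f_sub {dr er fr d e f : ZFSet} (h : FriedmanLe (tripleZ dr er fr) (tripleZ d e f)) :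
    (∀ m ∈ d, m ∈ dr) ∧ (∀ z ∈ f, z ∈ fr) ∧
      (∀ z : ZFSet, z ∈ e ↔ (z ∈ er ∧ ∃ a ∈ d, ∃ b ∈ d, z = ZFSet.pair a b)) := by
  obtain ⟨dp, ep, fp, dq, eq', fq, h1, h2, h3, h4, h5⟩ := h
  obtain ⟨rfl, rfl, rfl⟩ := tripleZ_injective h1
  obtain ⟨rfl, rfl, rfl⟩ := tripleZ_injective h2
  exact ⟨h3, h5, h4⟩

include hG in
lemma Hrel_unique {n y y' : ZFSet} (h1 : Hrel M G n y) (h2 : Hrel M G n y') : y = y' := by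
  obtain ⟨d1, e1, f1, hc1, hg1, hp1⟩ := h1
  obtain ⟨d2, e2, f2, hc2, hg2, hp2⟩ := h2
  obtain ⟨dr, er, fr, hcr, hgr, hl1, hl2⟩ := G_common hG hg1 hg2
  have hs1 := (le_f_sub hl1).2.1
  have hs2 := (le_f_sub hl2).2.1
  exact hcr.f_fun.2 n y y' (hs1 _ hp1) (hs2 _ hp2)

/-- The generic enumeration of `M`. -/
noncomputable def genH (M : ZFSet) (G : Set ZFSet) (n : ZFSet) : ZFSet :=
  if h : ∃ y, Hrel M G n y then h.choose else ∅

include hM hG in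
lemma genH_spec {n : ZFSet} (hn : n ∈ ZFSet.omega) : Hrel M G n (genH M G n) := by
  obtain ⟨q, hqG, hq⟩ := G_meets_Dnx hM hG hn hM.empty_mem
  have hqM : q ∈ M := friedmanP_subM hM (hG.sub hqG)
  obtain ⟨d, e, f, hc, hdom, hnd, -, rfl⟩ := (DnxSem_iff hM hqM).1 hq
  have : n ∈ domZ f := by rw [hdom]; exact hnd
  obtain ⟨b, hb⟩ := this
  have hex : ∃ y, Hrel M G n y := ⟨b, d, e, f, hc, hqG, hb⟩
  rw [genH, dif_pos hex]
  exact hex.choose_spec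

include hM hG in
lemma genH_memM {n : ZFSet} (hn : n ∈ ZFSet.omega) : genH M G n ∈ M := by
  obtain ⟨d, e, f, hc, hg, hp⟩ := genH_spec hM hG hn
  exact hc.f_ran _ ⟨n, hp⟩

include hM hG in
lemma genH_inj {m n : ZFSet} (hm : m ∈ ZFSet.omega) (hn : n ∈ ZFSet.omega)
    (h : genH M G m = genH M G n) : m = n := by
  obtain ⟨d1, e1, f1, hc1, hg1, hp1⟩ := genH_spec hM hG hm
  obtain ⟨d2, e2, f2, hc2, hg2, hp2⟩ := genH_spec hM hG hn
  obtain ⟨dr, er, fr, hcr, hgr, hl1, hl2⟩ := G_common hG hg1 hg2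
  have hs1 := (le_f_sub hl1).2.1
  have hs2 := (le_f_sub hl2).2.1
  rw [h] at hp1
  exact hcr.f_inj m n _ (hs1 _ hp1) (hs2 _ hp2)

include hM hG in
lemma genH_surj {x : ZFSet} (hx : x ∈ M) : ∃ n ∈ ZFSet.omega, genH M G n = x := by
  obtain ⟨q, hqG, hq⟩ := G_meets_Dnx hM hG (natZ_mem_omega 0) hx
  have hqM : q ∈ M := friedmanP_subM hM (hG.sub hqG)
  obtain ⟨d, e, f, hc, hdom, -, ⟨a, ha⟩, rfl⟩ := (DnxSem_iff hM hqM).1 hq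
  have had : a ∈ d := by
    have : a ∈ domZ f := ⟨x, ha⟩
    rwa [hdom, ZFSet.mem_toSet] at this
  have haω : a ∈ ZFSet.omega := hc.d_sub a had
  have : Hrel M G a x := ⟨d, e, f, hc, hqG, ha⟩
  exact ⟨a, haω, Hrel_unique hG (genH_spec hM hG haω) this⟩

/-- The basic condition forcing `m E n`. -/
def pCond (m n : ZFSet) : ZFSet := tripleZ {m, n} {ZFSet.pair m n} ∅

lemma domZ_empty : domZ (∅ : ZFSet) = (∅ : Set ZFSet) := by
  ext a
  simp only [domZ, Set.mem_setOf_eq, Set.mem_empty_iff_false, iff_false]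
  rintro ⟨b, hb⟩
  exact ZFSet.notMem_empty _ hb

lemma pCond_cond {M m n : ZFSet} (hm : m ∈ ZFSet.omega) (hn : n ∈ ZFSet.omega)
    (hmn : m ≠ n) : FCond M {m, n} {ZFSet.pair m n} ∅ := by
  constructor
  · intro u hu
    rcases ZFSet.mem_pair.1 hu with rfl | rfl
    · exact hm
    · exact hn
  · have : ({m, n} : ZFSet).toSet ⊆ {m, n} := by
      intro z hz
      rw [ZFSet.mem_toSet, ZFSet.mem_pair] at hz
      exact hz
    exact ((Set.finite_singleton n).insert m).subset this
  · intro z hz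
    rw [ZFSet.mem_singleton] at hz
    exact ⟨m, ZFSet.mem_pair.2 (Or.inl rfl), n, ZFSet.mem_pair.2 (Or.inr rfl), hz⟩
  · intro a ha
    have key : ∀ a b : ZFSet,
        Relation.TransGen (fun u v => ZFSet.pair u v ∈ ({ZFSet.pair m n} : ZFSet)) a b →
        a = m ∧ b = n := by
      intro a b h
      induction h with
      | single h =>
        rw [ZFSet.mem_singleton] at h
        obtain ⟨rfl, rfl⟩ := ZFSet.pair_injective h
        exact ⟨rfl, rfl⟩
      | tail h1 h2 ih =>
        rw [ZFSet.mem_singleton] at h2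
        obtain ⟨h3, rfl⟩ := ZFSet.pair_injective h2
        exact absurd (h3.symm.trans ih.2) hmn
    obtain ⟨rfl, h2⟩ := key a a ha
    exact hmn h2
  · exact ⟨fun x hx => absurd hx (ZFSet.notMem_empty x),
      fun a b b' hb => absurd hb (ZFSet.notMem_empty _)⟩
  · intro a a' b hb
    exact absurd hb (ZFSet.notMem_empty _)
  · left; exact domZ_empty
  · rintro b ⟨a, ha⟩
    exact absurd ha (ZFSet.notMem_empty _)
  · intro hdom
    exfalso
    have : m ∈ domZ (∅ : ZFSet) := by
      rw [hdom, ZFSet.mem_toSet]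
      exact ZFSet.mem_pair.2 (Or.inl rfl)
    rw [domZ_empty] at this
    exact this

lemma pCond_memP {M m n : ZFSet} (hm : m ∈ ZFSet.omega) (hn : n ∈ ZFSet.omega)
    (hmn : m ≠ n) : pCond m n ∈ FriedmanP M :=
  ⟨_, _, _, pCond_cond hm hn hmn, rfl⟩

include hM hG in
/-- Key equivalence: the basic condition is in `G` iff the generic enumeration
sends `m`, `n` to `∈`-related sets. -/
lemma pCond_mem_iff {m n : ZFSet} (hm : m ∈ ZFSet.omega) (hn : n ∈ ZFSet.omega)
    (hmn : m ≠ n) : pCond m n ∈ G ↔ genH M G m ∈ genH M G n := by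
  -- a common refinement carrying both m and n with total f
  obtain ⟨dm, em, fm, hcm, hgm, hpm⟩ := genH_spec hM hG hm
  obtain ⟨dn, en, fn, hcn, hgn, hpn⟩ := genH_spec hM hG hn
  obtain ⟨d0, e0, f0, hc0, hg0, hl0m, hl0n⟩ := G_common hG hgm hgn
  have hm0 : ZFSet.pair m (genH M G m) ∈ f0 := (le_f_sub hl0m).2.1 _ hpm
  have hn0 : ZFSet.pair n (genH M G n) ∈ f0 := (le_f_sub hl0n).2.1 _ hpn
  have hmd0 : m ∈ d0 := by
    have h1 : m ∈ domZ f0 := ⟨_, hm0⟩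
    rcases hc0.f_dom with h | h
    · rw [h] at h1; exact h1.elim
    · rw [h, ZFSet.mem_toSet] at h1; exact h1
  have hnd0 : n ∈ d0 := by
    have h1 : n ∈ domZ f0 := ⟨_, hn0⟩
    rcases hc0.f_dom with h | h
    · rw [h] at h1; exact h1.elim
    · rw [h, ZFSet.mem_toSet] at h1; exact h1
  have hdom0 : domZ f0 = d0.toSet := by
    rcases hc0.f_dom with h | h
    · exfalso
      have h1 : m ∈ domZ f0 := ⟨_, hm0⟩
      rw [h] at h1; exact h1
    · exact h
  have hcompat := hc0.f_compat hdom0 m hmd0 n hnd0 _ _ hm0 hn0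
  constructor
  · -- pCond ∈ G: take common refinement with the pair condition
    intro hpc
    obtain ⟨d1, e1, f1, hc1, hg1, hl1, hl2⟩ := G_common hG hg0 hpc
    have hm1 : ZFSet.pair m (genH M G m) ∈ f1 := (le_f_sub hl1).2.1 _ hm0
    have hn1 : ZFSet.pair n (genH M G n) ∈ f1 := (le_f_sub hl1).2.1 _ hn0
    have hmd1 : m ∈ d1 := (le_f_sub hl2).1 m (ZFSet.mem_pair.2 (Or.inl rfl))
    have hnd1 : n ∈ d1 := (le_f_sub hl2).1 n (ZFSet.mem_pair.2 (Or.inr rfl))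
    have hdom1 : domZ f1 = d1.toSet := by
      rcases hc1.f_dom with h | h
      · exfalso
        have h1 : m ∈ domZ f1 := ⟨_, hm1⟩
        rw [h] at h1; exact h1
      · exact h
    have hedge : ZFSet.pair m n ∈ e1 := by
      have := ((le_f_sub hl2).2.2 (ZFSet.pair m n)).1 (ZFSet.mem_singleton.2 rfl)
      exact this.1
    exact (hc1.f_compat hdom1 m hmd1 n hnd1 _ _ hm1 hn1).1 hedge
  · -- membership: the common refinement is below pCond
    intro hmem
    have hedge : ZFSet.pair m n ∈ e0 := hcompat.2 hmem
    have hle : FriedmanLe (tripleZ d0 e0 f0) (pCond m n) := by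
      refine ⟨d0, e0, f0, {m, n}, {ZFSet.pair m n}, ∅, rfl, rfl, ?_, ?_, ?_⟩
      · intro u hu
        rcases ZFSet.mem_pair.1 hu with rfl | rfl
        · exact hmd0
        · exact hnd0
      · intro z
        constructor
        · intro hz
          rw [ZFSet.mem_singleton] at hz
          subst hz
          exact ⟨hedge, m, ZFSet.mem_pair.2 (Or.inl rfl), n, ZFSet.mem_pair.2 (Or.inr rfl), rfl⟩
        · rintro ⟨hz, a, ha, b, hb, rfl⟩
          rw [ZFSet.mem_singleton]
          have hval : ∀ u ∈ ({m, n} : ZFSet), ZFSet.pair u (genH M G u) ∈ f0 := by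
            intro u hu
            rcases ZFSet.mem_pair.1 hu with rfl | rfl
            · exact hm0
            · exact hn0
          have hud : ∀ u ∈ ({m, n} : ZFSet), u ∈ d0 := by
            intro u hu
            rcases ZFSet.mem_pair.1 hu with rfl | rfl
            · exact hmd0
            · exact hnd0
          have hmemval : genH M G a ∈ genH M G b :=
            (hc0.f_compat hdom0 a (hud a ha) b (hud b hb) _ _ (hval a ha) (hval b hb)).1 hz
          rcases ZFSet.mem_pair.1 ha with rfl | rfl <;> rcases ZFSet.mem_pair.1 hb with rfl | rfl
          · exact absurd hmemval (ZFSet.mem_irrefl _)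
          · rfl
          · exact absurd hmem (ZFSet.mem_asymm hmemval)
          · exact absurd hmemval (ZFSet.mem_irrefl _)
      · intro z hz
        exact absurd hz (ZFSet.notMem_empty z)
    exact hG.upward _ hg0 _ (pCond_memP hm hn hmn) hle

/-- The maximal condition. -/
def oneCond : ZFSet := tripleZ ∅ ∅ ∅

lemma oneCond_cond {M : ZFSet} : FCond M ∅ ∅ ∅ := by
  constructor
  · intro u hu; exact absurd hu (ZFSet.notMem_empty u)
  · rw [ZFSet.toSet_empty]; exact Set.finite_empty
  · intro z hz; exact absurd hz (ZFSet.notMem_empty z)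
  · intro a ha
    have : a ∈ (∅ : ZFSet) := transGen_mem_d (fun x hx => absurd hx (ZFSet.notMem_empty x)) ha
    exact ZFSet.notMem_empty a this
  · exact ⟨fun x hx => absurd hx (ZFSet.notMem_empty x),
      fun a b b' hb => absurd hb (ZFSet.notMem_empty _)⟩
  · intro a a' b hb
    exact absurd hb (ZFSet.notMem_empty _)
  · left; exact domZ_empty
  · rintro b ⟨a, ha⟩
    exact absurd ha (ZFSet.notMem_empty _)
  · intro hdom i hi
    exact absurd hi (ZFSet.notMem_empty i)

lemma le_oneCond {M p : ZFSet} (hp : p ∈ FriedmanP M) : FriedmanLe p oneCond := by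
  obtain ⟨d, e, f, hc, rfl⟩ := hp
  refine ⟨d, e, f, ∅, ∅, ∅, rfl, rfl, ?_, ?_, ?_⟩
  · intro u hu; exact absurd hu (ZFSet.notMem_empty u)
  · intro z
    constructor
    · intro hz; exact absurd hz (ZFSet.notMem_empty z)
    · rintro ⟨-, a, ha, -⟩
      exact absurd ha (ZFSet.notMem_empty a)
  · intro z hz; exact absurd hz (ZFSet.notMem_empty z)

include hM hG in
lemma oneCond_mem : oneCond ∈ G := by
  obtain ⟨q, hqG, -⟩ := G_meets_Dnx hM hG (natZ_mem_omega 0) hM.empty_mem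
  exact hG.upward q hqG oneCond ⟨∅, ∅, ∅, oneCond_cond, rfl⟩ (le_oneCond (hG.sub hqG))

end Generic
/-! ### Section 11: evaluation of names and check names -/

section Names

attribute [local instance] Classical.allZFSetDefinable

lemma mem_val {G : Set ZFSet} {σ z : ZFSet} :
    z ∈ val G σ ↔ ∃ τ, (∃ p ∈ G, ZFSet.pair τ p ∈ σ) ∧ z = val G τ := by
  conv_lhs => rw [val, WellFounded.fix_eq]
  rw [ZFSet.mem_image]
  constructor
  · rintro ⟨τ, hτ, rfl⟩
    rw [ZFSet.mem_sep] at hτ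
    obtain ⟨hτ1, p, hp, hτp⟩ := hτ
    rw [dif_pos (transGen_mem_of_pair_mem hτp)]
    exact ⟨τ, ⟨p, hp, hτp⟩, rfl⟩
  · rintro ⟨τ, ⟨p, hp, hτp⟩, rfl⟩
    refine ⟨τ, ZFSet.mem_sep.2 ⟨?_, p, hp, hτp⟩, ?_⟩
    · apply ZFSet.mem_sUnion.2
      refine ⟨{τ, p}, ?_, ZFSet.mem_pair.2 (Or.inl rfl)⟩
      apply ZFSet.mem_sUnion.2
      exact ⟨ZFSet.pair τ p, hτp, ZFSet.mem_pair.2 (Or.inr rfl)⟩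
    · rw [dif_pos (transGen_mem_of_pair_mem hτp)]
      rfl

/-- The check name of a set, with respect to the maximal Friedman condition. -/
noncomputable def checkZ : ZFSet → ZFSet :=
  WellFounded.fix ZFSet.mem_wf fun x ih =>
    ZFSet.image (fun w => if h : w ∈ x then ZFSet.pair (ih w h) oneCond else ∅) x

lemma mem_checkZ {x z : ZFSet} :
    z ∈ checkZ x ↔ ∃ w ∈ x, z = ZFSet.pair (checkZ w) oneCond := by
  conv_lhs => rw [checkZ, WellFounded.fix_eq]
  rw [ZFSet.mem_image]
  constructor
  · rintro ⟨w, hw, rfl⟩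
    rw [dif_pos hw]
    exact ⟨w, hw, rfl⟩
  · rintro ⟨w, hw, rfl⟩
    refine ⟨w, hw, ?_⟩
    rw [dif_pos hw]
    rfl

lemma checkZ_isName {M : ZFSet} (x : ZFSet) : IsName (FriedmanP M) (checkZ x) := by
  induction x using ZFSet.inductionOn with
  | _ x ih =>
    constructor
    · intro z hz
      obtain ⟨w, hw, rfl⟩ := mem_checkZ.1 hz
      exact ⟨checkZ w, oneCond, ⟨∅, ∅, ∅, oneCond_cond, rfl⟩, rfl⟩
    · intro τ p hτp
      obtain ⟨w, hw, h⟩ := mem_checkZ.1 hτp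
      rw [(ZFSet.pair_injective h).1]
      exact ih w hw

lemma val_checkZ {G : Set ZFSet} (hone : oneCond ∈ G) (x : ZFSet) :
    val G (checkZ x) = x := by
  induction x using ZFSet.inductionOn with
  | _ x ih =>
    apply ZFSet.ext
    intro z
    rw [mem_val]
    constructor
    · rintro ⟨τ, ⟨p, hp, hτp⟩, rfl⟩
      obtain ⟨w, hw, h⟩ := mem_checkZ.1 hτp
      obtain ⟨rfl, -⟩ := ZFSet.pair_injective h
      rw [ih w hw]
      exact hw
    · intro hz
      exact ⟨checkZ z, ⟨oneCond, hone, mem_checkZ.2 ⟨z, hz, rfl⟩⟩, (ih z hz).symm⟩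

lemma oneCond_memM {M : ZFSet} (hM : IsCTM M) : oneCond ∈ M :=
  pairZ_memM hM hM.empty_mem (pairZ_memM hM hM.empty_mem hM.empty_mem)

lemma checkZ_memM_step {M x : ZFSet} (hM : IsCTM M) (hfin : x.toSet.Finite)
    (h : ∀ y ∈ x, checkZ y ∈ M) : checkZ x ∈ M := by
  have hsub : (checkZ x).toSet ⊆ (fun w => ZFSet.pair (checkZ w) oneCond) '' x.toSet := by
    intro z hz
    obtain ⟨w, hw, rfl⟩ := mem_checkZ.1 hz
    exact ⟨w, hw, rfl⟩
  refine finite_memM hM ((hfin.image _).subset hsub) ?_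
  intro z hz
  obtain ⟨w, hw, rfl⟩ := mem_checkZ.1 hz
  exact pairZ_memM hM (h w hw) (oneCond_memM hM)

lemma checkZ_natZ_memM {M : ZFSet} (hM : IsCTM M) (k : ℕ) : checkZ (natZ k) ∈ M := by
  induction k using Nat.strong_induction_on with
  | _ k ih =>
    refine checkZ_memM_step hM (natZ_toSet_finite k) ?_
    intro y hy
    obtain ⟨j, hj, rfl⟩ := mem_natZ.1 hy
    exact ih j hj

lemma checkZ_nat_memM {M m : ZFSet} (hM : IsCTM M) (hm : m ∈ ZFSet.omega) :
    checkZ m ∈ M := by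
  obtain ⟨k, rfl⟩ := mem_omega_iff.1 hm
  exact checkZ_natZ_memM hM k

lemma checkZ_sing_memM {M m : ZFSet} (hM : IsCTM M) (hm : m ∈ ZFSet.omega) :
    checkZ ({m} : ZFSet) ∈ M := by
  refine checkZ_memM_step hM ((Set.finite_singleton m).subset ?_) ?_
  · intro z hz
    rwa [ZFSet.mem_toSet, ZFSet.mem_singleton] at hz
  · intro y hy
    rw [ZFSet.mem_singleton] at hy
    subst hy
    exact checkZ_nat_memM hM hm

lemma checkZ_doub_memM {M m n : ZFSet} (hM : IsCTM M) (hm : m ∈ ZFSet.omega)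
    (hn : n ∈ ZFSet.omega) : checkZ ({m, n} : ZFSet) ∈ M := by
  refine checkZ_memM_step hM (((Set.finite_singleton n).insert m).subset ?_) ?_
  · intro z hz
    rw [ZFSet.mem_toSet, ZFSet.mem_pair] at hz
    rcases hz with rfl | rfl
    · exact Set.mem_insert _ _
    · exact Set.mem_insert_of_mem _ rfl
  · intro y hy
    rcases ZFSet.mem_pair.1 hy with rfl | rfl
    · exact checkZ_nat_memM hM hm
    · exact checkZ_nat_memM hM hn

lemma checkZ_pairZ_memM {M m n : ZFSet} (hM : IsCTM M) (hm : m ∈ ZFSet.omega)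
    (hn : n ∈ ZFSet.omega) : checkZ (ZFSet.pair m n) ∈ M := by
  refine checkZ_memM_step hM ?_ ?_
  · rw [show (ZFSet.pair m n).toSet = {{m}, {m, n}} from ZFSet.coe_pair m n]
    exact (Set.finite_singleton _).insert _
  · intro y hy
    rw [ZFSet.pair, ZFSet.mem_pair] at hy
    rcases hy with rfl | rfl
    · exact checkZ_sing_memM hM hm
    · exact checkZ_doub_memM hM hm hn

end Names
/-! ### Section 12a: semantic predicates for the name of `E`, and their bridges -/

section SigmaE

attribute [local instance] Classical.allZFSetDefinable

variable {M : ZFSet}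

/-- `C` is a (partial) check-name sequence. -/
def CheckSeqSem (M C w one : ZFSet) : Prop :=
  (∀ z ∈ C, ∃ xk ∈ M, ∃ u ∈ M, z = ZFSet.pair xk u) ∧
  (∀ xk ∈ M, ∀ u ∈ M, ∀ u' ∈ M, ZFSet.pair xk u ∈ C → ZFSet.pair xk u' ∈ C → u = u') ∧
  (∀ xk ∈ M, ∀ u ∈ M, ZFSet.pair xk u ∈ C →
    (xk ∈ w ∧ (∀ j ∈ xk, ∃ cj ∈ M, ZFSet.pair j cj ∈ C) ∧
      (∀ w' ∈ M, (w' ∈ u ↔ ∃ j ∈ xk, ∃ cj ∈ M, ZFSet.pair j cj ∈ C ∧ w' = ZFSet.pair cj one))))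

def CheckNatSem (M m cm w one : ZFSet) : Prop :=
  ∃ C ∈ M, CheckSeqSem M C w one ∧ ZFSet.pair m cm ∈ C

def CheckPairSem (M m n cp w one : ZFSet) : Prop :=
  ∃ cm ∈ M, ∃ cn ∈ M, ∃ pcm ∈ M, ∃ a1 ∈ M, ∃ pcn ∈ M, ∃ a2 ∈ M, ∃ u1 ∈ M, ∃ u2 ∈ M,
    CheckNatSem M m cm w one ∧ CheckNatSem M n cn w one ∧
    pcm = ZFSet.pair cm one ∧ a1 = ({pcm} : ZFSet) ∧ pcn = ZFSet.pair cn one ∧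
    a2 = ({pcm, pcn} : ZFSet) ∧ u1 = ZFSet.pair a1 one ∧ u2 = ZFSet.pair a2 one ∧
    cp = ({u1, u2} : ZFSet)

def PCondSem (M m n q : ZFSet) : Prop :=
  ∃ dd ∈ M, ∃ pmn ∈ M, ∃ ee ∈ M, ∃ emp ∈ M,
    dd = ({m, n} : ZFSet) ∧ pmn = ZFSet.pair m n ∧ ee = ({pmn} : ZFSet) ∧
    emp = (∅ : ZFSet) ∧ q = tripleZ dd ee emp

def NMSem (M m n u w one : ZFSet) : Prop :=
  ∃ cp ∈ M, ∃ q ∈ M, CheckPairSem M m n cp w one ∧ PCondSem M m n q ∧ u = ZFSet.pair cp q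

def ThetaSem (M m n u w one c01 : ZFSet) : Prop :=
  (m = n ∧ u = c01) ∨ (¬ m = n ∧ NMSem M m n u w one)

def PsiSem (M y z w one c01 : ZFSet) : Prop :=
  ∀ u ∈ M, (u ∈ z ↔ ∃ m ∈ y, ∃ n ∈ y, ThetaSem M m n u w one c01)

def SigSem (M z w one c01 : ZFSet) : Prop := ∃ y ∈ w, PsiSem M y z w one c01

/-- The actual name-pair `⟨(m,n)ˇ, p_{m,n}⟩`. -/
noncomputable def nmPairZ (m n : ZFSet) : ZFSet :=
  ZFSet.pair (checkZ (ZFSet.pair m n)) (pCond m n)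

/-- Diagonal-safe variant. -/
noncomputable def FFZ (m n : ZFSet) : ZFSet :=
  if m = n then nmPairZ (natZ 0) (natZ 1) else nmPairZ m n

/-- `{F(m,n) ∣ m, n ∈ y}`. -/
noncomputable def zYZ (y : ZFSet) : ZFSet :=
  ZFSet.sUnion (ZFSet.image (fun m => ZFSet.image (fun n => FFZ m n) y) y)

/-- The obvious check-name sequence up to `k`. -/
noncomputable def ccZ (k : ZFSet) : ZFSet :=
  ZFSet.image (fun j => ZFSet.pair j (checkZ j)) (insert k k)

lemma nat_mem_omega {k i : ZFSet} (hk : k ∈ ZFSet.omega) (hik : i ∈ k) :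
    i ∈ ZFSet.omega := by
  obtain ⟨K, rfl⟩ := mem_omega_iff.1 hk
  obtain ⟨a, -, rfl⟩ := mem_natZ.1 hik
  exact natZ_mem_omega a

lemma nat_mem_trans {k i j : ZFSet} (hk : k ∈ ZFSet.omega) (hik : i ∈ k) (hji : j ∈ i) :
    j ∈ k := by
  obtain ⟨K, rfl⟩ := mem_omega_iff.1 hk
  obtain ⟨a, ha, rfl⟩ := mem_natZ.1 hik
  obtain ⟨b, hb, rfl⟩ := mem_natZ.1 hji
  exact natZ_mem_of_lt (by omega)

lemma checkZ_sing_eq (m : ZFSet) :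
    checkZ ({m} : ZFSet) = {ZFSet.pair (checkZ m) oneCond} := by
  apply ZFSet.ext; intro z
  rw [mem_checkZ, ZFSet.mem_singleton]
  constructor
  · rintro ⟨w, hw, rfl⟩
    rw [ZFSet.mem_singleton] at hw
    rw [hw]
  · rintro rfl
    exact ⟨m, ZFSet.mem_singleton.2 rfl, rfl⟩

lemma checkZ_doub_eq (m n : ZFSet) :
    checkZ ({m, n} : ZFSet) = {ZFSet.pair (checkZ m) oneCond, ZFSet.pair (checkZ n) oneCond} := by
  apply ZFSet.ext; intro z
  rw [mem_checkZ, ZFSet.mem_pair]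
  constructor
  · rintro ⟨w, hw, rfl⟩
    rcases ZFSet.mem_pair.1 hw with rfl | rfl
    · exact Or.inl rfl
    · exact Or.inr rfl
  · rintro (rfl | rfl)
    · exact ⟨m, ZFSet.mem_pair.2 (Or.inl rfl), rfl⟩
    · exact ⟨n, ZFSet.mem_pair.2 (Or.inr rfl), rfl⟩

lemma checkZ_pair_eq (m n : ZFSet) :
    checkZ (ZFSet.pair m n) =
      {ZFSet.pair (checkZ ({m} : ZFSet)) oneCond,
       ZFSet.pair (checkZ ({m, n} : ZFSet)) oneCond} := by
  apply ZFSet.ext; intro z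
  rw [mem_checkZ, ZFSet.mem_pair]
  constructor
  · rintro ⟨w, hw, rfl⟩
    rw [ZFSet.pair, ZFSet.mem_pair] at hw
    rcases hw with rfl | rfl
    · exact Or.inl rfl
    · exact Or.inr rfl
  · rintro (rfl | rfl)
    · exact ⟨{m}, by rw [ZFSet.pair, ZFSet.mem_pair]; exact Or.inl rfl, rfl⟩
    · exact ⟨{m, n}, by rw [ZFSet.pair, ZFSet.mem_pair]; exact Or.inr rfl, rfl⟩

lemma checkSeqSem_val (hM : IsCTM M) {C : ZFSet} (hCM : C ∈ M)
    (hC : CheckSeqSem M C ZFSet.omega oneCond) :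
    ∀ k c : ZFSet, ZFSet.pair k c ∈ C → c = checkZ k := by
  obtain ⟨hA, hB, hCc⟩ := hC
  intro k
  induction k using ZFSet.inductionOn with
  | _ k ih =>
    intro c hkc
    obtain ⟨hkM, hcM⟩ := pair_args_inM hM hCM hkc
    obtain ⟨-, htot, hchar⟩ := hCc k hkM c hcM hkc
    apply ZFSet.ext; intro z
    rw [mem_checkZ]
    constructor
    · intro hz
      obtain ⟨j, hj, cj, hcjM, hcjC, rfl⟩ := (hchar z (memM_of_mem hM hcM hz)).1 hz
      exact ⟨j, hj, by rw [ih j hj cj hcjC]⟩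
    · rintro ⟨j, hj, rfl⟩
      obtain ⟨cj, hcjM, hcjC⟩ := htot j hj
      have hcj : cj = checkZ j := ih j hj cj hcjC
      refine (hchar _ (pairZ_memM hM (hcj ▸ hcjM) (oneCond_memM hM))).2
        ⟨j, hj, cj, hcjM, hcjC, ?_⟩
      rw [hcj]

lemma mem_ccZ {k z : ZFSet} :
    z ∈ ccZ k ↔ ∃ j, (j = k ∨ j ∈ k) ∧ z = ZFSet.pair j (checkZ j) := by
  rw [ccZ, ZFSet.mem_image]
  constructor
  · rintro ⟨j, hj, rfl⟩
    exact ⟨j, ZFSet.mem_insert_iff.1 hj, rfl⟩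
  · rintro ⟨j, hj, rfl⟩
    exact ⟨j, ZFSet.mem_insert_iff.2 hj, rfl⟩

lemma ccZ_memM (hM : IsCTM M) {k : ZFSet} (hk : k ∈ ZFSet.omega) : ccZ k ∈ M := by
  obtain ⟨K, rfl⟩ := mem_omega_iff.1 hk
  have hfin : (ccZ (natZ K)).toSet.Finite := by
    have hsub : (ccZ (natZ K)).toSet ⊆
        (fun j => ZFSet.pair j (checkZ j)) '' (insert (natZ K) (natZ K) : ZFSet).toSet := by
      intro z hz
      obtain ⟨j, hj, rfl⟩ := mem_ccZ.1 hz
      exact ⟨j, (ZFSet.mem_toSet _ _).2 (ZFSet.mem_insert_iff.2 hj), rfl⟩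
    refine (Set.Finite.image _ ?_).subset hsub
    rw [ZFSet.toSet_insert]
    exact (natZ_toSet_finite K).insert _
  refine finite_memM hM hfin ?_
  intro z hz
  obtain ⟨j, hj, rfl⟩ := mem_ccZ.1 hz
  have hjω : j ∈ ZFSet.omega := by
    rcases hj with rfl | hj
    · exact natZ_mem_omega K
    · exact nat_mem_omega (natZ_mem_omega K) hj
  exact pairZ_memM hM (omega_subM hM hjω) (checkZ_nat_memM hM hjω)

lemma ccZ_checkSeqSem (hM : IsCTM M) {k : ZFSet} (hk : k ∈ ZFSet.omega) :
    CheckSeqSem M (ccZ k) ZFSet.omega oneCond := by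
  have hmemω : ∀ j, (j = k ∨ j ∈ k) → j ∈ ZFSet.omega := by
    rintro j (rfl | hj)
    · exact hk
    · exact nat_mem_omega hk hj
  have hclosed : ∀ xk, (xk = k ∨ xk ∈ k) → ∀ j ∈ xk, (j = k ∨ j ∈ k) := by
    rintro xk (rfl | hxk) j hj
    · exact Or.inr hj
    · exact Or.inr (nat_mem_trans hk hxk hj)
  refine ⟨?_, ?_, ?_⟩
  · intro z hz
    obtain ⟨j, hj, rfl⟩ := mem_ccZ.1 hz
    exact ⟨j, omega_subM hM (hmemω j hj), checkZ j, checkZ_nat_memM hM (hmemω j hj), rfl⟩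
  · intro xk _ u _ u' _ hu hu'
    obtain ⟨j, hj, h1⟩ := mem_ccZ.1 hu
    obtain ⟨j', hj', h2⟩ := mem_ccZ.1 hu'
    obtain ⟨rfl, rfl⟩ := ZFSet.pair_injective h1
    obtain ⟨rfl, rfl⟩ := ZFSet.pair_injective h2
    rfl
  · intro xk _ u _ hu
    obtain ⟨j, hj, h1⟩ := mem_ccZ.1 hu
    obtain ⟨rfl, rfl⟩ := ZFSet.pair_injective h1
    refine ⟨hmemω xk hj, ?_, ?_⟩
    · intro j hjx
      have hj' := hclosed xk hj j hjx
      exact ⟨checkZ j, checkZ_nat_memM hM (hmemω j hj'), mem_ccZ.2 ⟨j, hj', rfl⟩⟩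
    · intro w' _
      rw [mem_checkZ]
      constructor
      · rintro ⟨j, hjx, rfl⟩
        have hj' := hclosed xk hj j hjx
        exact ⟨j, hjx, checkZ j, checkZ_nat_memM hM (hmemω j hj'), mem_ccZ.2 ⟨j, hj', rfl⟩, rfl⟩
      · rintro ⟨j, hjx, cj, hcjM, hcjC, rfl⟩
        obtain ⟨j', hj', h2⟩ := mem_ccZ.1 hcjC
        obtain ⟨rfl, rfl⟩ := ZFSet.pair_injective h2
        exact ⟨j, hjx, rfl⟩

lemma checkNatSem_iff (hM : IsCTM M) {m cm : ZFSet} (hm : m ∈ ZFSet.omega) :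
    CheckNatSem M m cm ZFSet.omega oneCond ↔ cm = checkZ m := by
  constructor
  · rintro ⟨C, hCM, hC, hmc⟩
    exact checkSeqSem_val hM hCM hC m cm hmc
  · rintro rfl
    exact ⟨ccZ m, ccZ_memM hM hm, ccZ_checkSeqSem hM hm,
      mem_ccZ.2 ⟨m, Or.inl rfl, rfl⟩⟩

lemma checkPairSem_iff (hM : IsCTM M) {m n cp : ZFSet} (hm : m ∈ ZFSet.omega)
    (hn : n ∈ ZFSet.omega) :
    CheckPairSem M m n cp ZFSet.omega oneCond ↔ cp = checkZ (ZFSet.pair m n) := by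
  have honeM := oneCond_memM hM
  constructor
  · rintro ⟨cm, hcmM, cn, hcnM, pcm, -, a1, -, pcn, -, a2, -, u1, -, u2, -,
      hcm, hcn, rfl, rfl, rfl, rfl, rfl, rfl, rfl⟩
    rw [(checkNatSem_iff hM hm).1 hcm, (checkNatSem_iff hM hn).1 hcn]
    rw [checkZ_pair_eq, checkZ_sing_eq, checkZ_doub_eq]
  · rintro rfl
    have hcmM : checkZ m ∈ M := checkZ_nat_memM hM hm
    have hcnM : checkZ n ∈ M := checkZ_nat_memM hM hn
    have hpcmM : ZFSet.pair (checkZ m) oneCond ∈ M := pairZ_memM hM hcmM honeM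
    have hpcnM : ZFSet.pair (checkZ n) oneCond ∈ M := pairZ_memM hM hcnM honeM
    have ha1M : ({ZFSet.pair (checkZ m) oneCond} : ZFSet) ∈ M := sing_memM hM hpcmM
    have ha2M : ({ZFSet.pair (checkZ m) oneCond, ZFSet.pair (checkZ n) oneCond} : ZFSet) ∈ M :=
      hM.pairing _ hpcmM _ hpcnM
    have hu1M : ZFSet.pair ({ZFSet.pair (checkZ m) oneCond} : ZFSet) oneCond ∈ M :=
      pairZ_memM hM ha1M honeM
    have hu2M : ZFSet.pair ({ZFSet.pair (checkZ m) oneCond, ZFSet.pair (checkZ n) oneCond} : ZFSet) oneCond ∈ M :=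
      pairZ_memM hM ha2M honeM
    refine ⟨checkZ m, hcmM, checkZ n, hcnM, _, hpcmM, _, ha1M, _, hpcnM, _, ha2M,
      _, hu1M, _, hu2M,
      (checkNatSem_iff hM hm).2 rfl, (checkNatSem_iff hM hn).2 rfl,
      rfl, rfl, rfl, rfl, rfl, rfl, ?_⟩
    rw [checkZ_pair_eq, checkZ_sing_eq, checkZ_doub_eq]

lemma pCondSem_iff (hM : IsCTM M) {m n q : ZFSet} (hm : m ∈ M) (hn : n ∈ M) :
    PCondSem M m n q ↔ q = pCond m n := by
  constructor
  · rintro ⟨dd, -, pmn, -, ee, -, emp, -, rfl, rfl, rfl, rfl, rfl⟩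
    rfl
  · rintro rfl
    exact ⟨{m, n}, hM.pairing m hm n hn, ZFSet.pair m n, pairZ_memM hM hm hn,
      {ZFSet.pair m n}, sing_memM hM (pairZ_memM hM hm hn), ∅, hM.empty_mem,
      rfl, rfl, rfl, rfl, rfl⟩

lemma pCond_memM (hM : IsCTM M) {m n : ZFSet} (hm : m ∈ M) (hn : n ∈ M) :
    pCond m n ∈ M :=
  pairZ_memM hM (hM.pairing m hm n hn)
    (pairZ_memM hM (sing_memM hM (pairZ_memM hM hm hn)) hM.empty_mem)

lemma nmSem_iff (hM : IsCTM M) {m n u : ZFSet} (hm : m ∈ ZFSet.omega)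
    (hn : n ∈ ZFSet.omega) :
    NMSem M m n u ZFSet.omega oneCond ↔ u = nmPairZ m n := by
  have hmM := omega_subM hM hm
  have hnM := omega_subM hM hn
  constructor
  · rintro ⟨cp, -, q, -, hcp, hq, rfl⟩
    rw [(checkPairSem_iff hM hm hn).1 hcp, (pCondSem_iff hM hmM hnM).1 hq]
    rfl
  · rintro rfl
    exact ⟨checkZ (ZFSet.pair m n), checkZ_pairZ_memM hM hm hn, pCond m n,
      pCond_memM hM hmM hnM, (checkPairSem_iff hM hm hn).2 rfl,
      (pCondSem_iff hM hmM hnM).2 rfl, rfl⟩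

lemma thetaSem_iff (hM : IsCTM M) {m n u : ZFSet} (hm : m ∈ ZFSet.omega)
    (hn : n ∈ ZFSet.omega) :
    ThetaSem M m n u ZFSet.omega oneCond (nmPairZ (natZ 0) (natZ 1)) ↔ u = FFZ m n := by
  rw [FFZ]
  by_cases h : m = n
  · rw [if_pos h, ThetaSem]
    constructor
    · rintro (⟨-, rfl⟩ | ⟨hne, -⟩)
      · rfl
      · exact absurd h hne
    · rintro rfl
      exact Or.inl ⟨h, rfl⟩
  · rw [if_neg h, ThetaSem]
    constructor
    · rintro (⟨he, -⟩ | ⟨-, hnm⟩)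
      · exact absurd he h
      · exact (nmSem_iff hM hm hn).1 hnm
    · rintro rfl
      exact Or.inr ⟨h, (nmSem_iff hM hm hn).2 rfl⟩

lemma mem_zYZ {y z : ZFSet} : z ∈ zYZ y ↔ ∃ m ∈ y, ∃ n ∈ y, z = FFZ m n := by
  rw [zYZ, ZFSet.mem_sUnion]
  constructor
  · rintro ⟨w, hw, hz⟩
    obtain ⟨m, hm, rfl⟩ := ZFSet.mem_image.1 hw
    obtain ⟨n, hn, rfl⟩ := ZFSet.mem_image.1 hz
    exact ⟨m, hm, n, hn, rfl⟩
  · rintro ⟨m, hm, n, hn, rfl⟩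
    exact ⟨ZFSet.image (fun n => FFZ m n) y, ZFSet.mem_image.2 ⟨m, hm, rfl⟩,
      ZFSet.mem_image.2 ⟨n, hn, rfl⟩⟩

lemma nmPairZ_memM (hM : IsCTM M) {m n : ZFSet} (hm : m ∈ ZFSet.omega)
    (hn : n ∈ ZFSet.omega) : nmPairZ m n ∈ M :=
  pairZ_memM hM (checkZ_pairZ_memM hM hm hn)
    (pCond_memM hM (omega_subM hM hm) (omega_subM hM hn))

lemma FFZ_memM (hM : IsCTM M) {m n : ZFSet} (hm : m ∈ ZFSet.omega)
    (hn : n ∈ ZFSet.omega) : FFZ m n ∈ M := by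
  rw [FFZ]
  by_cases h : m = n
  · rw [if_pos h]
    exact nmPairZ_memM hM (natZ_mem_omega 0) (natZ_mem_omega 1)
  · rw [if_neg h]
    exact nmPairZ_memM hM hm hn

lemma zYZ_memM (hM : IsCTM M) {y : ZFSet} (hy : y ∈ ZFSet.omega) : zYZ y ∈ M := by
  obtain ⟨K, rfl⟩ := mem_omega_iff.1 hy
  have hfin : (zYZ (natZ K)).toSet.Finite := by
    have hsub : (zYZ (natZ K)).toSet ⊆
        Set.image2 FFZ (natZ K).toSet (natZ K).toSet := by
      intro z hz
      obtain ⟨m, hm, n, hn, rfl⟩ := mem_zYZ.1 hz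
      exact ⟨m, hm, n, hn, rfl⟩
    exact (Set.Finite.image2 _ (natZ_toSet_finite K) (natZ_toSet_finite K)).subset hsub
  refine finite_memM hM hfin ?_
  intro z hz
  obtain ⟨m, hm, n, hn, rfl⟩ := mem_zYZ.1 hz
  exact FFZ_memM hM (nat_mem_omega (natZ_mem_omega K) hm) (nat_mem_omega (natZ_mem_omega K) hn)

lemma psiSem_iff (hM : IsCTM M) {y z : ZFSet} (hy : y ∈ ZFSet.omega) (hz : z ∈ M) :
    PsiSem M y z ZFSet.omega oneCond (nmPairZ (natZ 0) (natZ 1)) ↔ z = zYZ y := by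
  constructor
  · intro hPsi
    apply ZFSet.ext; intro u
    rw [mem_zYZ]
    constructor
    · intro hu
      obtain ⟨m, hm, n, hn, hθ⟩ := (hPsi u (memM_of_mem hM hz hu)).1 hu
      exact ⟨m, hm, n, hn,
        (thetaSem_iff hM (nat_mem_omega hy hm) (nat_mem_omega hy hn)).1 hθ⟩
    · rintro ⟨m, hm, n, hn, rfl⟩
      refine (hPsi _ (FFZ_memM hM (nat_mem_omega hy hm) (nat_mem_omega hy hn))).2 ?_
      exact ⟨m, hm, n, hn,
        (thetaSem_iff hM (nat_mem_omega hy hm) (nat_mem_omega hy hn)).2 rfl⟩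
  · rintro rfl
    intro u hu
    rw [mem_zYZ]
    constructor
    · rintro ⟨m, hm, n, hn, rfl⟩
      exact ⟨m, hm, n, hn,
        (thetaSem_iff hM (nat_mem_omega hy hm) (nat_mem_omega hy hn)).2 rfl⟩
    · rintro ⟨m, hm, n, hn, hθ⟩
      exact ⟨m, hm, n, hn,
        (thetaSem_iff hM (nat_mem_omega hy hm) (nat_mem_omega hy hn)).1 hθ⟩

end SigmaE
/-! ### Section 12b: definability of the `σ_E` predicates -/

section SigmaEDef

variable {M : ZFSet} {n : ℕ}

lemma isDef_checkSeqSem (hM : IsCTM M) (kC kw kone : Fin n) :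
    IsDef M fun v => CheckSeqSem M (v kC) (v kw) (v kone) := by
  have hA := isDef_fShape hM kC
  have hB := isDef_fFun hM kC
  -- totality clause, at arity n+2 (xk at `(last n).castSucc`, u at `last (n+1)`)
  have htot : IsDef M fun v : Fin (n+2) → ZFSet =>
      ∀ j ∈ v (Fin.last n).castSucc, ∃ cj ∈ M,
        ZFSet.pair j cj ∈ v kC.castSucc.castSucc := by
    have core : IsDef M fun v : Fin (n+4) → ZFSet =>
        ZFSet.pair (v (Fin.last (n+2)).castSucc) (v (Fin.last (n+3))) ∈
          v kC.castSucc.castSucc.castSucc.castSucc :=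
      isDef_memPair hM _ _ _
    refine (IsDef.ballSet hM (Fin.last n).castSucc core.exM).congr fun v hv => ?_
    simp only [Fin.snoc_last, Fin.snoc_castSucc]
  -- characterization clause, at arity n+2
  have hchar : IsDef M fun v : Fin (n+2) → ZFSet =>
      ∀ w' ∈ M, (w' ∈ v (Fin.last (n+1)) ↔
        ∃ j ∈ v (Fin.last n).castSucc, ∃ cj ∈ M,
          ZFSet.pair j cj ∈ v kC.castSucc.castSucc ∧
            w' = ZFSet.pair cj (v kone.castSucc.castSucc)) := by
    have core : IsDef M fun v : Fin (n+5) → ZFSet =>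
        ZFSet.pair (v (Fin.last (n+3)).castSucc) (v (Fin.last (n+4))) ∈
          v kC.castSucc.castSucc.castSucc.castSucc.castSucc ∧
        v (Fin.last (n+2)).castSucc.castSucc =
          ZFSet.pair (v (Fin.last (n+4))) (v kone.castSucc.castSucc.castSucc.castSucc.castSucc) :=
      (isDef_memPair hM _ _ _).and (isDef_eqPair hM _ _ _)
    have hrhs : IsDef M fun v : Fin (n+3) → ZFSet =>
        ∃ j ∈ v (Fin.last n).castSucc.castSucc, ∃ cj ∈ M,
          ZFSet.pair j cj ∈ v kC.castSucc.castSucc.castSucc ∧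
            v (Fin.last (n+2)) =
              ZFSet.pair cj (v kone.castSucc.castSucc.castSucc) := by
      refine (IsDef.bexSet hM (Fin.last n).castSucc.castSucc core.exM).congr
        fun v hv => ?_
      simp only [Fin.snoc_last, Fin.snoc_castSucc]
    have hiff : IsDef M fun v : Fin (n+3) → ZFSet =>
        (v (Fin.last (n+2)) ∈ v (Fin.last (n+1)).castSucc ↔
          ∃ j ∈ v (Fin.last n).castSucc.castSucc, ∃ cj ∈ M,
            ZFSet.pair j cj ∈ v kC.castSucc.castSucc.castSucc ∧
              v (Fin.last (n+2)) =
                ZFSet.pair cj (v kone.castSucc.castSucc.castSucc)) :=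
      (IsDef.mem _ _).iff hrhs
    refine hiff.allM.congr fun v hv => ?_
    simp only [Fin.snoc_last, Fin.snoc_castSucc]
  have hC : IsDef M fun v : Fin (n+2) → ZFSet =>
      ZFSet.pair (v (Fin.last n).castSucc) (v (Fin.last (n+1))) ∈ v kC.castSucc.castSucc →
        (v (Fin.last n).castSucc ∈ v kw.castSucc.castSucc ∧
          (∀ j ∈ v (Fin.last n).castSucc, ∃ cj ∈ M,
            ZFSet.pair j cj ∈ v kC.castSucc.castSucc) ∧
          (∀ w' ∈ M, (w' ∈ v (Fin.last (n+1)) ↔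
            ∃ j ∈ v (Fin.last n).castSucc, ∃ cj ∈ M,
              ZFSet.pair j cj ∈ v kC.castSucc.castSucc ∧
                w' = ZFSet.pair cj (v kone.castSucc.castSucc)))) :=
    (isDef_memPair hM _ _ _).imp ((IsDef.mem _ _).and (htot.and hchar))
  have hCfull := hC.allM.allM
  refine (hA.and (hB.and hCfull)).congr fun v hv => ?_
  rw [CheckSeqSem]
  simp only [Fin.snoc_last, Fin.snoc_castSucc]

lemma isDef_checkNatSem (hM : IsCTM M) (km kcm kw kone : Fin n) :
    IsDef M fun v => CheckNatSem M (v km) (v kcm) (v kw) (v kone) := by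
  have core : IsDef M fun v : Fin (n+1) → ZFSet =>
      CheckSeqSem M (v (Fin.last n)) (v kw.castSucc) (v kone.castSucc) ∧
        ZFSet.pair (v km.castSucc) (v kcm.castSucc) ∈ v (Fin.last n) :=
    (isDef_checkSeqSem hM _ _ _).and (isDef_memPair hM _ _ _)
  refine core.exM.congr fun v hv => ?_
  rw [CheckNatSem]
  simp only [Fin.snoc_last, Fin.snoc_castSucc]

lemma isDef_pCondSem (hM : IsCTM M) (km kn kq : Fin n) :
    IsDef M fun v => PCondSem M (v km) (v kn) (v kq) := by
  have core : IsDef M fun v : Fin (n+4) → ZFSet =>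
      v (Fin.last n).castSucc.castSucc.castSucc =
        ({v km.castSucc.castSucc.castSucc.castSucc, v kn.castSucc.castSucc.castSucc.castSucc} : ZFSet) ∧
      v (Fin.last (n+1)).castSucc.castSucc =
        ZFSet.pair (v km.castSucc.castSucc.castSucc.castSucc) (v kn.castSucc.castSucc.castSucc.castSucc) ∧
      v (Fin.last (n+2)).castSucc = ({v (Fin.last (n+1)).castSucc.castSucc} : ZFSet) ∧
      v (Fin.last (n+3)) = (∅ : ZFSet) ∧
      v kq.castSucc.castSucc.castSucc.castSucc =
        tripleZ (v (Fin.last n).castSucc.castSucc.castSucc) (v (Fin.last (n+2)).castSucc)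
          (v (Fin.last (n+3))) :=
    (isDef_eqDoub hM _ _ _).and ((isDef_eqPair hM _ _ _).and
      ((isDef_eqSing hM _ _).and ((isDef_eqEmpty hM _).and (isDef_eqTriple hM _ _ _ _))))
  refine core.exM.exM.exM.exM.congr fun v hv => ?_
  rw [PCondSem]
  simp only [Fin.snoc_last, Fin.snoc_castSucc]

lemma isDef_checkPairSem (hM : IsCTM M) (km kn kcp kw kone : Fin n) :
    IsDef M fun v => CheckPairSem M (v km) (v kn) (v kcp) (v kw) (v kone) := by
  have core : IsDef M fun v : Fin (n+8) → ZFSet =>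
      CheckNatSem M (v km.castSucc.castSucc.castSucc.castSucc.castSucc.castSucc.castSucc.castSucc) (v ((Fin.last n).castSucc.castSucc.castSucc.castSucc.castSucc.castSucc.castSucc)) (v kw.castSucc.castSucc.castSucc.castSucc.castSucc.castSucc.castSucc.castSucc) (v kone.castSucc.castSucc.castSucc.castSucc.castSucc.castSucc.castSucc.castSucc) ∧
      CheckNatSem M (v kn.castSucc.castSucc.castSucc.castSucc.castSucc.castSucc.castSucc.castSucc) (v ((Fin.last (n+1)).castSucc.castSucc.castSucc.castSucc.castSucc.castSucc)) (v kw.castSucc.castSucc.castSucc.castSucc.castSucc.castSucc.castSucc.castSucc) (v kone.castSucc.castSucc.castSucc.castSucc.castSucc.castSucc.castSucc.castSucc) ∧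
      v ((Fin.last (n+2)).castSucc.castSucc.castSucc.castSucc.castSucc) = ZFSet.pair (v ((Fin.last n).castSucc.castSucc.castSucc.castSucc.castSucc.castSucc.castSucc)) (v kone.castSucc.castSucc.castSucc.castSucc.castSucc.castSucc.castSucc.castSucc) ∧
      v ((Fin.last (n+3)).castSucc.castSucc.castSucc.castSucc) = ({v ((Fin.last (n+2)).castSucc.castSucc.castSucc.castSucc.castSucc)} : ZFSet) ∧
      v ((Fin.last (n+4)).castSucc.castSucc.castSucc) = ZFSet.pair (v ((Fin.last (n+1)).castSucc.castSucc.castSucc.castSucc.castSucc.castSucc)) (v kone.castSucc.castSucc.castSucc.castSucc.castSucc.castSucc.castSucc.castSucc) ∧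
      v ((Fin.last (n+5)).castSucc.castSucc) = ({v ((Fin.last (n+2)).castSucc.castSucc.castSucc.castSucc.castSucc), v ((Fin.last (n+4)).castSucc.castSucc.castSucc)} : ZFSet) ∧
      v ((Fin.last (n+6)).castSucc) = ZFSet.pair (v ((Fin.last (n+3)).castSucc.castSucc.castSucc.castSucc)) (v kone.castSucc.castSucc.castSucc.castSucc.castSucc.castSucc.castSucc.castSucc) ∧
      v ((Fin.last (n+7))) = ZFSet.pair (v ((Fin.last (n+5)).castSucc.castSucc)) (v kone.castSucc.castSucc.castSucc.castSucc.castSucc.castSucc.castSucc.castSucc) ∧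
      v kcp.castSucc.castSucc.castSucc.castSucc.castSucc.castSucc.castSucc.castSucc = ({v ((Fin.last (n+6)).castSucc), v ((Fin.last (n+7)))} : ZFSet) :=
    (isDef_checkNatSem hM _ _ _ _).and ((isDef_checkNatSem hM _ _ _ _).and
      ((isDef_eqPair hM _ _ _).and ((isDef_eqSing hM _ _).and
      ((isDef_eqPair hM _ _ _).and ((isDef_eqDoub hM _ _ _).and
      ((isDef_eqPair hM _ _ _).and ((isDef_eqPair hM _ _ _).and
      (isDef_eqDoub hM _ _ _))))))))
  refine core.exM.exM.exM.exM.exM.exM.exM.exM.congr fun v hv => ?_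
  rw [CheckPairSem]
  simp only [Fin.snoc_last, Fin.snoc_castSucc]

lemma isDef_nmSem (hM : IsCTM M) (km kn ku kw kone : Fin n) :
    IsDef M fun v => NMSem M (v km) (v kn) (v ku) (v kw) (v kone) := by
  have core : IsDef M fun v : Fin (n+2) → ZFSet =>
      CheckPairSem M (v km.castSucc.castSucc) (v kn.castSucc.castSucc)
        (v (Fin.last n).castSucc) (v kw.castSucc.castSucc) (v kone.castSucc.castSucc) ∧
      PCondSem M (v km.castSucc.castSucc) (v kn.castSucc.castSucc) (v (Fin.last (n+1))) ∧
      v ku.castSucc.castSucc = ZFSet.pair (v (Fin.last n).castSucc) (v (Fin.last (n+1))) :=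
    (isDef_checkPairSem hM _ _ _ _ _).and ((isDef_pCondSem hM _ _ _).and
      (isDef_eqPair hM _ _ _))
  refine core.exM.exM.congr fun v hv => ?_
  rw [NMSem]
  simp only [Fin.snoc_last, Fin.snoc_castSucc]

lemma isDef_thetaSem (hM : IsCTM M) (km kn ku kw kone kc01 : Fin n) :
    IsDef M fun v => ThetaSem M (v km) (v kn) (v ku) (v kw) (v kone) (v kc01) :=
  ((IsDef.eq km kn).and (IsDef.eq ku kc01)).or
    (((IsDef.eq km kn).not).and (isDef_nmSem hM km kn ku kw kone))

lemma isDef_psiSem (hM : IsCTM M) (ky kz kw kone kc01 : Fin n) :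
    IsDef M fun v => PsiSem M (v ky) (v kz) (v kw) (v kone) (v kc01) := by
  have inner : IsDef M fun v : Fin (n+3) → ZFSet =>
      ThetaSem M (v (Fin.last (n+1)).castSucc) (v (Fin.last (n+2)))
        (v (Fin.last n).castSucc.castSucc) (v kw.castSucc.castSucc.castSucc)
        (v kone.castSucc.castSucc.castSucc) (v kc01.castSucc.castSucc.castSucc) :=
    isDef_thetaSem hM _ _ _ _ _ _
  have hrhs : IsDef M fun v : Fin (n+1) → ZFSet =>
      ∃ m ∈ v ky.castSucc, ∃ n' ∈ v ky.castSucc,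
        ThetaSem M m n' (v (Fin.last n)) (v kw.castSucc) (v kone.castSucc)
          (v kc01.castSucc) := by
    refine (IsDef.bexSet hM ky.castSucc (IsDef.bexSet hM ky.castSucc.castSucc inner)).congr
      fun v hv => ?_
    simp only [Fin.snoc_last, Fin.snoc_castSucc]
  have hiff : IsDef M fun v : Fin (n+1) → ZFSet =>
      (v (Fin.last n) ∈ v kz.castSucc ↔
        ∃ m ∈ v ky.castSucc, ∃ n' ∈ v ky.castSucc,
          ThetaSem M m n' (v (Fin.last n)) (v kw.castSucc) (v kone.castSucc)
            (v kc01.castSucc)) :=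
    (IsDef.mem _ _).iff hrhs
  refine hiff.allM.congr fun v hv => ?_
  rw [PsiSem]
  simp only [Fin.snoc_last, Fin.snoc_castSucc]

lemma isDef_sigSem (hM : IsCTM M) (kz kw kone kc01 : Fin n) :
    IsDef M fun v => SigSem M (v kz) (v kw) (v kone) (v kc01) := by
  have inner : IsDef M fun v : Fin (n+1) → ZFSet =>
      PsiSem M (v (Fin.last n)) (v kz.castSucc) (v kw.castSucc) (v kone.castSucc)
        (v kc01.castSucc) :=
    isDef_psiSem hM _ _ _ _ _
  refine (IsDef.bexSet hM kw inner).congr fun v hv => ?_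
  rw [SigSem]
  simp only [Fin.snoc_last, Fin.snoc_castSucc]

end SigmaEDef
/-! ### Section 12c: the name `σ_E` exists in `M` -/

section SigmaEExists

variable {M : ZFSet}

lemma exists_sigmaE (hM : IsCTM M) :
    ∃ σE : ZFSet, σE ∈ M ∧
      ∀ z, (z ∈ σE ↔ ∃ m n : ZFSet, m ∈ ZFSet.omega ∧ n ∈ ZFSet.omega ∧ m ≠ n ∧
        z = nmPairZ m n) := by
  classical
  set c01 : ZFSet := nmPairZ (natZ 0) (natZ 1) with hc01
  set a : Fin 3 → ZFSet := ![ZFSet.omega, oneCond, c01] with ha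
  have haM : ∀ i, a i ∈ M := by
    intro i
    fin_cases i
    · exact hM.infinity
    · exact oneCond_memM hM
    · exact nmPairZ_memM hM (natZ_mem_omega 0) (natZ_mem_omega 1)
  obtain ⟨φ, hφ⟩ := isDef_psiSem (M := M) hM (3 : Fin 5) (4 : Fin 5) (0 : Fin 5)
    (1 : Fin 5) (2 : Fin 5)
  obtain ⟨ψ, hψ⟩ := isDef_sigSem (M := M) hM (3 : Fin 4) (0 : Fin 4) (1 : Fin 4) (2 : Fin 4)
  -- the collection step
  have hcoll : ∃ b ∈ M, ∀ y ∈ ZFSet.omega, ∃ z ∈ b,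
      Sat M φ (Fin.snoc (Fin.snoc a y) z) := by
    refine hM.collection 3 φ a haM ZFSet.omega hM.infinity ?_
    intro y hy
    refine ⟨zYZ y, zYZ_memM hM hy, ?_⟩
    have htup : ∀ i, (Fin.snoc (Fin.snoc a y) (zYZ y) : Fin 5 → ZFSet) i ∈ M :=
      IsDef.snoc_mem_of (IsDef.snoc_mem_of haM (omega_subM hM hy)) (zYZ_memM hM hy)
    refine (hφ _ htup).1 ?_
    show PsiSem M y (zYZ y) ZFSet.omega oneCond c01
    exact (psiSem_iff hM hy (zYZ_memM hM hy)).2 rfl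
  obtain ⟨b, hbM, hb⟩ := hcoll
  -- the separation step
  set σ' := ZFSet.sep (fun z => Sat M ψ (Fin.snoc a z)) b with hσ'
  have hσ'M : σ' ∈ M := hM.separation 3 ψ a haM b hbM
  have hσ'mem : ∀ w, (w ∈ σ' ↔ w ∈ b ∧ SigSem M w ZFSet.omega oneCond c01) := by
    intro w
    rw [hσ', ZFSet.mem_sep]
    constructor
    · rintro ⟨hwb, hSat⟩
      have hwM : w ∈ M := memM_of_mem hM hbM hwb
      have htup : ∀ i, (Fin.snoc a w : Fin 4 → ZFSet) i ∈ M :=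
        IsDef.snoc_mem_of haM hwM
      refine ⟨hwb, ?_⟩
      have := (hψ _ htup).2 hSat
      exact this
    · rintro ⟨hwb, hSig⟩
      have hwM : w ∈ M := memM_of_mem hM hbM hwb
      have htup : ∀ i, (Fin.snoc a w : Fin 4 → ZFSet) i ∈ M :=
        IsDef.snoc_mem_of haM hwM
      refine ⟨hwb, (hψ _ htup).1 ?_⟩
      show SigSem M w ZFSet.omega oneCond c01
      exact hSig
  refine ⟨ZFSet.sUnion σ', hM.union _ hσ'M, ?_⟩
  intro z
  rw [ZFSet.mem_sUnion]
  constructor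
  · rintro ⟨w, hwσ, hzw⟩
    obtain ⟨hwb, y, hyω, hPsi⟩ := (hσ'mem w).1 hwσ
    have hwM : w ∈ M := memM_of_mem hM hbM hwb
    have hw : w = zYZ y := (psiSem_iff hM hyω hwM).1 hPsi
    rw [hw] at hzw
    obtain ⟨m, hm, n, hn, rfl⟩ := mem_zYZ.1 hzw
    by_cases hmn : m = n
    · rw [FFZ, if_pos hmn]
      refine ⟨natZ 0, natZ 1, natZ_mem_omega 0, natZ_mem_omega 1, ?_, rfl⟩
      intro h
      exact absurd (natZ_inj h) (by omega)
    · rw [FFZ, if_neg hmn]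
      exact ⟨m, n, nat_mem_omega hyω hm, nat_mem_omega hyω hn, hmn, rfl⟩
  · rintro ⟨m, n, hm, hn, hmn, rfl⟩
    obtain ⟨A, rfl⟩ := mem_omega_iff.1 hm
    obtain ⟨B, rfl⟩ := mem_omega_iff.1 hn
    set y := natZ (max A B + 1) with hy
    have hyω : y ∈ ZFSet.omega := natZ_mem_omega _
    have hmy : natZ A ∈ y := natZ_mem_of_lt (by omega)
    have hny : natZ B ∈ y := natZ_mem_of_lt (by omega)
    obtain ⟨z', hz'b, hSat⟩ := hb y hyω
    have hz'M : z' ∈ M := memM_of_mem hM hbM hz'b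
    have htup : ∀ i, (Fin.snoc (Fin.snoc a y) z' : Fin 5 → ZFSet) i ∈ M :=
      IsDef.snoc_mem_of (IsDef.snoc_mem_of haM (omega_subM hM hyω)) hz'M
    have hPsi : PsiSem M y z' ZFSet.omega oneCond c01 := (hφ _ htup).2 hSat
    have hz' : z' = zYZ y := (psiSem_iff hM hyω hz'M).1 hPsi
    refine ⟨z', (hσ'mem z').2 ⟨hz'b, y, hyω, hPsi⟩, ?_⟩
    rw [hz']
    refine mem_zYZ.2 ⟨natZ A, hmy, natZ B, hny, ?_⟩
    rw [FFZ, if_neg hmn]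

end SigmaEExists
/-! ### Section 13: final assembly lemmas -/

section Final

variable {M : ZFSet}

lemma sigmaE_isName {σE : ZFSet}
    (hmem : ∀ z, (z ∈ σE ↔ ∃ m n : ZFSet, m ∈ ZFSet.omega ∧ n ∈ ZFSet.omega ∧ m ≠ n ∧
      z = nmPairZ m n)) : IsName (FriedmanP M) σE := by
  constructor
  · intro z hz
    obtain ⟨m, n, hm, hn, hmn, rfl⟩ := (hmem z).1 hz
    exact ⟨checkZ (ZFSet.pair m n), pCond m n, pCond_memP hm hn hmn, rfl⟩
  · intro τ p hτp
    obtain ⟨m, n, hm, hn, hmn, h⟩ := (hmem _).1 hτp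
    rw [(ZFSet.pair_injective h).1]
    exact checkZ_isName _

lemma val_sigmaE {G : Set ZFSet} (hone : oneCond ∈ G) {σE : ZFSet}
    (hmem : ∀ z, (z ∈ σE ↔ ∃ m n : ZFSet, m ∈ ZFSet.omega ∧ n ∈ ZFSet.omega ∧ m ≠ n ∧
      z = nmPairZ m n)) :
    ∀ z, (z ∈ val G σE ↔ ∃ m n : ZFSet, m ∈ ZFSet.omega ∧ n ∈ ZFSet.omega ∧ m ≠ n ∧
      pCond m n ∈ G ∧ z = ZFSet.pair m n) := by
  intro z
  rw [mem_val]
  constructor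
  · rintro ⟨τ, ⟨p, hpG, hτp⟩, rfl⟩
    obtain ⟨m, n, hm, hn, hmn, h⟩ := (hmem _).1 hτp
    obtain ⟨rfl, rfl⟩ := ZFSet.pair_injective h
    exact ⟨m, n, hm, hn, hmn, hpG, val_checkZ hone (ZFSet.pair m n)⟩
  · rintro ⟨m, n, hm, hn, hmn, hpG, rfl⟩
    refine ⟨checkZ (ZFSet.pair m n), ⟨pCond m n, hpG, (hmem _).2 ⟨m, n, hm, hn, hmn, rfl⟩⟩, ?_⟩
    rw [val_checkZ hone]

end Final
/-- Let `M` be a countable transitive model of `ZF⁻` and `G` an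
`𝔽^M`-generic filter over `M` (i.e. generic with respect to all dense sets
definable over `M`). Then there is a binary relation `E` on `ω` with
`E ∈ M[G]` such that `(ω, E)` and `(M, ∈)` are isomorphic in `V`. -/
theorem statement9 (M : ZFSet) (hM : IsCTM M) (G : Set ZFSet)
    (hG : IsGenericRaw M (DefClasses M) (FriedmanP M) FriedmanLe G) :
    ∃ E : ZFSet, E ∈ MG M (FriedmanP M) G ∧
      (∀ x ∈ E, ∃ m ∈ ZFSet.omega, ∃ n ∈ ZFSet.omega, x = ZFSet.pair m n) ∧
      ∃ h : ZFSet → ZFSet,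
        (∀ n ∈ ZFSet.omega, h n ∈ M) ∧
        (∀ m ∈ ZFSet.omega, ∀ n ∈ ZFSet.omega, h m = h n → m = n) ∧
        (∀ x ∈ M, ∃ n ∈ ZFSet.omega, h n = x) ∧
        (∀ m ∈ ZFSet.omega, ∀ n ∈ ZFSet.omega, (ZFSet.pair m n ∈ E ↔ h m ∈ h n)) := by
  obtain ⟨σE, hσM, hσmem⟩ := exists_sigmaE hM
  have hone : oneCond ∈ G := oneCond_mem hM hG
  have hval := val_sigmaE hone hσmem
  refine ⟨val G σE, ⟨σE, hσM, sigmaE_isName hσmem, rfl⟩, ?_, genH M G, ?_, ?_, ?_, ?_⟩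
  · intro x hx
    obtain ⟨m, n, hm, hn, -, -, rfl⟩ := (hval x).1 hx
    exact ⟨m, hm, n, hn, rfl⟩
  · intro n hn
    exact genH_memM hM hG hn
  · intro m hm n hn h
    exact genH_inj hM hG hm hn h
  · intro x hx
    exact genH_surj hM hG hx
  · intro m hm n hn
    by_cases hmn : m = n
    · subst hmn
      constructor
      · intro h
        obtain ⟨m', n', -, -, hne, -, h'⟩ := (hval _).1 h
        obtain ⟨h1, h2⟩ := ZFSet.pair_injective h'
        exact absurd (h1.symm.trans h2) hne
      · intro h
        exact absurd h (ZFSet.mem_irrefl _)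
    · rw [← pCond_mem_iff hM hG hm hn hmn]
      constructor
      · intro h
        obtain ⟨m', n', -, -, -, hpG, h'⟩ := (hval _).1 h
        obtain ⟨rfl, rfl⟩ := ZFSet.pair_injective h'
        exact hpG
      · intro h
        exact (hval _).2 ⟨m, n, hm, hn, hmn, h, rfl⟩
end CF
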